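/- arXiv:math/0605746 — 13 statements merged into one kernel-verified Lean document; each statement's English description precedes it below -/
import Mathlib

section
/- Let s1, ..., sn be positive integers with gcd(s1, ..., sn) = 1 and let d = gcd(s1, ..., s(n-1)). Then g(s1, ..., sn) = d * g(s1/d, ..., s(n-1)/d, sn) + (d-1)*sn. -/
/-- `m` is a nonnegative integer combination of the values of `s`. -/
def Representable {n : ℕ} (s : Fin n → ℕ) (m : ℕ) : Prop :=
  ∃ c : Fin n → ℕ, m = ∑ i, c i * s i

/-- `g` is the Frobenius number of `s`: the largest non-representable integer. -/
def IsFrob {n : ℕ} (s : Fin n → ℕ) (g : ℕ) : Prop :=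
  ¬ Representable s g ∧ ∀ m : ℕ, g < m → Representable s m

theorem frob_unique {n : ℕ} {s : Fin n → ℕ} {g h : ℕ}
    (hg : IsFrob s g) (hh : IsFrob s h) : g = h := by
  rcases lt_trichotomy g h with hlt | he | hlt
  · exact absurd (hg.2 h hlt) hh.1
  · exact he
  · exact absurd (hh.2 g hlt) hg.1

/-- Brauer–Shockley: with d = gcd(s1,...,s(n-1)),
g(s1,...,sn) = d * g(s1/d, ..., s(n-1)/d, sn) + (d-1)*sn. -/
theorem brauer_shockley (n : ℕ) (hn : 1 ≤ n) (s : Fin (n + 1) → ℕ)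
    (hpos : ∀ i, 0 < s i)
    (hgcd : Finset.univ.gcd s = 1)
    (d : ℕ) (hd : d = Finset.univ.gcd (fun i : Fin n => s i.castSucc))
    (g g' : ℕ)
    (hg : IsFrob s g)
    (hg' : IsFrob (Fin.snoc (fun i : Fin n => s i.castSucc / d) (s (Fin.last n))) g') :
    g = d * g' + (d - 1) * s (Fin.last n) := by
  set a := s (Fin.last n) with ha
  set t : Fin n → ℕ := fun i => s i.castSucc / d with ht
  set s' : Fin (n + 1) → ℕ := Fin.snoc t a with hs'
  -- basic facts
  have hdvd : ∀ i : Fin n, d ∣ s i.castSucc := fun i => by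
    rw [hd]; exact Finset.gcd_dvd (Finset.mem_univ i)
  have hd0 : 0 < d := by
    rcases Nat.eq_zero_or_pos d with h0 | h
    · exfalso
      have i0 : Fin n := ⟨0, hn⟩
      have := hdvd i0
      rw [h0] at this
      have := hpos i0.castSucc
      omega
    · exact h
  have hts : ∀ i : Fin n, d * t i = s i.castSucc := fun i =>
    Nat.mul_div_cancel' (hdvd i) 
  have hda : Nat.gcd d a = 1 := by
    have h1 : Nat.gcd d a ∣ Finset.univ.gcd s := by
      apply Finset.dvd_gcd
      intro i _
      induction i using Fin.lastCases with
      | last => exact Nat.gcd_dvd_right d a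
      | cast i => exact dvd_trans (Nat.gcd_dvd_left d a) (hdvd i)
    rw [hgcd] at h1
    exact Nat.eq_one_of_dvd_one h1
  -- characterization of representability by s
  have reprS : ∀ m, Representable s m ↔
      ∃ k x, Representable t x ∧ m = d * x + k * a := by
    intro m
    constructor
    · rintro ⟨c, rfl⟩
      refine ⟨c (Fin.last n), ∑ i, c i.castSucc * t i, ⟨fun i => c i.castSucc, rfl⟩, ?_⟩
      rw [Fin.sum_univ_castSucc, Finset.mul_sum]
      congr 1
      apply Finset.sum_congr rfl
      intro i _
      rw [← hts i]; ring
    · rintro ⟨k, x, ⟨c, rfl⟩, rfl⟩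
      refine ⟨Fin.snoc c k, ?_⟩
      rw [Fin.sum_univ_castSucc]
      simp only [Fin.snoc_castSucc, Fin.snoc_last]
      rw [Finset.mul_sum]
      congr 1
      apply Finset.sum_congr rfl
      intro i _
      rw [← hts i]; ring
  -- characterization of representability by s'
  have reprS' : ∀ m, Representable s' m ↔
      ∃ k x, Representable t x ∧ m = x + k * a := by
    intro m
    constructor
    · rintro ⟨c, rfl⟩
      refine ⟨c (Fin.last n), ∑ i, c i.castSucc * t i, ⟨fun i => c i.castSucc, rfl⟩, ?_⟩
      rw [Fin.sum_univ_castSucc]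
      simp only [hs', Fin.snoc_castSucc, Fin.snoc_last]
    · rintro ⟨k, x, ⟨c, rfl⟩, rfl⟩
      refine ⟨Fin.snoc c k, ?_⟩
      rw [Fin.sum_univ_castSucc]
      simp only [hs', Fin.snoc_castSucc, Fin.snoc_last]
  -- the claimed value is the Frobenius number of s
  have key : IsFrob s (d * g' + (d - 1) * a) := by
    constructor
    · rw [reprS]
      rintro ⟨k, x, hx, heq⟩
      -- mod d analysis: k ≡ d-1 [MOD d]
      have hmod : (d - 1) * a ≡ k * a [MOD d] := by
        have h1 : d * g' + (d - 1) * a ≡ d * x + k * a [MOD d] := heq ▸ Nat.ModEq.refl _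
        have h2 : d * g' + (d - 1) * a ≡ (d - 1) * a [MOD d] := by
          simpa using (Nat.ModEq.add_right ((d-1)*a) (Nat.modEq_zero_iff_dvd.mpr ⟨g', rfl⟩))
        have h3 : d * x + k * a ≡ k * a [MOD d] := by
          simpa using (Nat.ModEq.add_right (k*a) (Nat.modEq_zero_iff_dvd.mpr ⟨x, rfl⟩))
        exact (h2.symm.trans h1).trans h3
      have hk : d - 1 ≡ k [MOD d] := Nat.ModEq.cancel_right_of_coprime hda hmod
      have hkmod : k % d = d - 1 := by
        have := (hk.symm : k ≡ d - 1 [MOD d])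
        unfold Nat.ModEq at this
        rw [this, Nat.mod_eq_of_lt (by omega)]
      -- so k = d * j + (d - 1)
      set j := k / d with hj
      have hkeq : k = d * j + (d - 1) := by
        have hdm := Nat.div_add_mod k d
        rw [hkmod] at hdm
        rw [hj]
        omega
      have heq2 : g' = x + j * a := by
        rw [hkeq] at heq
        have : d * g' + (d-1) * a = d * (x + j * a) + (d-1) * a := by
          rw [heq]; ring
        have h4 : d * g' = d * (x + j * a) := by omega
        exact Nat.eq_of_mul_eq_mul_left hd0 h4
      exact hg'.1 ((reprS' g').mpr ⟨j, x, hx, heq2⟩)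
    · intro m hm
      -- pick k < d with k * a ≡ m [MOD d]
      have hca : Nat.Coprime a d := Nat.Coprime.symm hda
      set k := (m * a ^ (Nat.totient d - 1)) % d with hk
      have hkd : k < d := Nat.mod_lt _ hd0
      have hkm : k * a ≡ m [MOD d] := by
        have he : a ^ (Nat.totient d - 1) * a = a ^ Nat.totient d := by
          rw [← pow_succ]
          congr 1
          have := Nat.totient_pos.mpr hd0
          omega
        calc k * a ≡ m * a ^ (Nat.totient d - 1) * a [MOD d] := by
              exact Nat.ModEq.mul_right a (Nat.mod_modEq _ d)
          _ = m * (a ^ Nat.totient d) := by rw [mul_assoc, he]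
          _ ≡ m * 1 [MOD d] := Nat.ModEq.mul_left m (Nat.ModEq.pow_totient hca)
          _ = m := by ring
      have hka : k * a ≤ (d - 1) * a := Nat.mul_le_mul_right a (by omega)
      have hkm' : k * a ≤ m := by omega
      have hdvdm : d ∣ m - k * a := (Nat.modEq_iff_dvd' hkm').mp hkm
      set x := (m - k * a) / d with hx
      have hdx : d * x = m - k * a := Nat.mul_div_cancel' hdvdm
      have hxg : g' < x := by
        have h5 : d * g' < d * x := by omega
        exact lt_of_mul_lt_mul_left h5 (Nat.zero_le d)
      obtain ⟨j, y, hy, hxy⟩ := (reprS' x).mp (hg'.2 x hxg)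
      refine (reprS m).mpr ⟨d * j + k, y, hy, ?_⟩
      have : d * x = d * y + d * j * a := by rw [hxy]; ring
      have hm' : m = d * x + k * a := by omega
      rw [hm', this]; ring
  exact frob_unique hg key
end

section
/- For distinct primes p1 < p2 < ... < p(n+1), let P = p1*p2*...*p(n+1) and consider the n+1 integers P/p1, ..., P/p(n+1) (which have gcd 1). The Frobenius number of this set equals n*P - (P/p1 + P/p2 + ... + P/p(n+1)). -/
/-- For distinct primes p1 < ... < p(n+1), with P their product,
the Frobenius number of {P/p1, ..., P/p(n+1)} is n*P - (P/p1 + ... + P/p(n+1)). -/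
theorem frobenius_prime_products (n : ℕ) (hn : 1 ≤ n) (p : Fin (n + 1) → ℕ)
    (hp : ∀ i, Nat.Prime (p i)) (hmono : StrictMono p) :
    IsFrob (fun i => (∏ j, p j) / p i)
      (n * ∏ j, p j - ∑ i, (∏ j, p j) / p i) := by
  classical
  set P : ℕ := ∏ j, p j with hP
  set s : Fin (n + 1) → ℕ := fun i => P / p i with hsdef
  have hinj : Function.Injective p := hmono.injective
  have hs : ∀ i, s i = ∏ j ∈ Finset.univ.erase i, p j := by
    intro i
    have h := Finset.mul_prod_erase Finset.univ p (Finset.mem_univ i)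
    show P / p i = _
    rw [hP, ← h, Nat.mul_div_cancel_left _ (hp i).pos]
  have hps : ∀ i, p i * s i = P := by
    intro i
    rw [hs i, hP, Finset.mul_prod_erase Finset.univ p (Finset.mem_univ i)]
  have hdvd : ∀ i j : Fin (n + 1), i ≠ j → p i ∣ s j := by
    intro i j hij
    rw [hs j]
    exact Finset.dvd_prod_of_mem _ (Finset.mem_erase.2 ⟨hij, Finset.mem_univ i⟩)
  have hnd : ∀ i, ¬ p i ∣ s i := by
    intro i h
    rw [hs i] at h
    obtain ⟨j, hj, hdj⟩ := (Nat.Prime.prime (hp i)).exists_mem_finset_dvd h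
    have hij : p i = p j := (Nat.prime_dvd_prime_iff_eq (hp i) (hp j)).1 hdj
    exact (Finset.mem_erase.1 hj).1 (hinj hij).symm
  have hPpos : 0 < P := Finset.prod_pos fun i _ => (hp i).pos
  have hsP : ∀ i, 2 * s i ≤ P := by
    intro i
    calc 2 * s i ≤ p i * s i := Nat.mul_le_mul_right _ (hp i).two_le
    _ = P := hps i
  have hsumP : ∑ i, (P - s i) + ∑ i, s i = (n + 1) * P := by
    rw [← Finset.sum_add_distrib]
    have : ∀ i ∈ Finset.univ, P - s i + s i = P := by
      intro i _
      have := hsP i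
      omega
    rw [Finset.sum_congr rfl this, Finset.sum_const, Finset.card_univ,
      Fintype.card_fin, smul_eq_mul]
  have hsum2 : 2 * ∑ i, s i ≤ (n + 1) * P := by
    rw [Finset.mul_sum]
    calc ∑ i, 2 * s i ≤ ∑ _i : Fin (n + 1), P := Finset.sum_le_sum fun i _ => hsP i
    _ = (n + 1) * P := by
        rw [Finset.sum_const, Finset.card_univ, Fintype.card_fin, smul_eq_mul]
  have hn1P : (n + 1) * P = n * P + P := by ring
  have hsum' : ∑ i, s i ≤ n * P := by
    have h2 : P ≤ n * P := Nat.le_mul_of_pos_left P hn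
    omega
  -- key zero facts in ZMod (p i)
  have hsz : ∀ i j : Fin (n + 1), j ≠ i → ((s j : ZMod (p i)) = 0) := by
    intro i j hji
    rw [ZMod.natCast_eq_zero_iff]
    exact hdvd i j (Ne.symm hji)
  have hPz : ∀ i, ((P : ℕ) : ZMod (p i)) = 0 := by
    intro i
    rw [ZMod.natCast_eq_zero_iff, ← hps i]
    exact Dvd.intro _ rfl
  constructor
  · -- g is not representable
    rintro ⟨d, hd⟩
    have hdge : ∀ i, p i ≤ d i + 1 := by
      intro i
      haveI : Fact (p i).Prime := ⟨hp i⟩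
      have hs0 : (s i : ZMod (p i)) ≠ 0 := by
        rw [Ne, ZMod.natCast_eq_zero_iff]
        exact hnd i
      -- compute g mod p i two ways
      have hz1 : ((n * P - ∑ j, s j : ℕ) : ZMod (p i)) = (d i : ZMod (p i)) * (s i) := by
        rw [hd]
        push_cast
        rw [Finset.sum_eq_single i]
        · intro j _ hji
          rw [hsz i j hji, mul_zero]
        · intro h; exact absurd (Finset.mem_univ i) h
      have hgP : (n * P - ∑ j, s j) + ∑ j, s j = n * P := Nat.sub_add_cancel hsum'
      have hz2 : ((n * P - ∑ j, s j : ℕ) : ZMod (p i)) = -(s i : ZMod (p i)) := by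
        have := congrArg (fun t : ℕ => (t : ZMod (p i))) hgP
        push_cast at this
        rw [Finset.sum_eq_single i (fun j _ hji => hsz i j hji)
          (fun h => absurd (Finset.mem_univ i) h)] at this
        rw [hPz i, mul_zero] at this
        linear_combination this
      have hdi : ((d i : ℕ) + 1 : ZMod (p i)) * (s i : ZMod (p i)) = 0 := by
        rw [add_mul, one_mul, ← hz1, hz2]
        ring
      have : ((d i + 1 : ℕ) : ZMod (p i)) = 0 := by
        push_cast
        rcases mul_eq_zero.1 hdi with h | h
        · exact_mod_cast h
        · exact absurd h hs0
      rw [ZMod.natCast_eq_zero_iff] at this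
      exact Nat.le_of_dvd (Nat.succ_pos _) this
    have hterm : ∀ i ∈ Finset.univ, P - s i ≤ d i * s i := by
      intro i _
      have h1 : (p i - 1) * s i ≤ d i * s i :=
        Nat.mul_le_mul_right _ (by have := hdge i; omega)
      rw [Nat.sub_mul, one_mul, hps i] at h1
      exact h1
    have hge : ∑ i, (P - s i) ≤ ∑ i, d i * s i := Finset.sum_le_sum hterm
    rw [← hd] at hge
    have hb : Finset.univ.sum s = ∑ i, s i := rfl
    omega
  · -- everything bigger than g is representable
    intro m hm
    set c : Fin (n + 1) → ℕ := fun i => ((m : ZMod (p i)) * ((s i : ZMod (p i)))⁻¹).val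
      with hcdef
    have hclt : ∀ i, c i < p i := by
      intro i
      haveI : Fact (p i).Prime := ⟨hp i⟩
      exact ZMod.val_lt _
    have hceq : ∀ i, (c i : ZMod (p i)) * (s i : ZMod (p i)) = (m : ZMod (p i)) := by
      intro i
      haveI : Fact (p i).Prime := ⟨hp i⟩
      have hs0 : (s i : ZMod (p i)) ≠ 0 := by
        rw [Ne, ZMod.natCast_eq_zero_iff]
        exact hnd i
      show ((((m : ZMod (p i)) * ((s i : ZMod (p i)))⁻¹).val : ℕ) : ZMod (p i)) * _ = _
      rw [ZMod.natCast_val, ZMod.cast_id, mul_assoc, inv_mul_cancel₀ hs0, mul_one]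
    set T : ℕ := ∑ j, c j * s j with hT
    have hmodT : ∀ i, (m : ZMod (p i)) = ((T : ℕ) : ZMod (p i)) := by
      intro i
      rw [hT]
      push_cast
      rw [Finset.sum_eq_single i (fun j _ hji => by rw [hsz i j hji, mul_zero])
        (fun h => absurd (Finset.mem_univ i) h)]
      exact (hceq i).symm
    have hPdvdZ : (P : ℤ) ∣ (T : ℤ) - (m : ℤ) := by
      have hcast : ((P : ℕ) : ℤ) = ∏ j, ((p j : ℕ) : ℤ) := by
        rw [hP]; push_cast; rfl
      rw [hcast]
      apply Fintype.prod_dvd_of_coprime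
      · intro i j hij
        show IsCoprime ((p i : ℕ) : ℤ) ((p j : ℕ) : ℤ)
        rw [Nat.isCoprime_iff_coprime]
        exact (Nat.coprime_primes (hp i) (hp j)).2 fun h => hij (hinj h)
      · intro i
        have hmeq : m ≡ T [MOD p i] :=
          (ZMod.natCast_eq_natCast_iff m T (p i)).1 (hmodT i)
        exact (Nat.modEq_iff_dvd).1 hmeq
    have hTle : T + ∑ i, s i ≤ (n + 1) * P := by
      have : T ≤ ∑ i, (P - s i) := by
        rw [hT]
        apply Finset.sum_le_sum
        intro i _
        have h1 : c i * s i ≤ (p i - 1) * s i :=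
          Nat.mul_le_mul_right _ (by have := hclt i; omega)
        rw [Nat.sub_mul, one_mul, hps i] at h1
        exact h1
      omega
    have hm' : n * P - ∑ i, s i < m := hm
    have hTm : T ≤ m := by
      by_contra h
      push_neg at h
      have hPdvdN' : P ∣ T - m := by
        have h2 : ((T - m : ℕ) : ℤ) = (T : ℤ) - m := by
          push_cast [Nat.cast_sub h.le]; ring
        exact_mod_cast h2 ▸ hPdvdZ
      have h3 : P ≤ T - m := Nat.le_of_dvd (by omega) hPdvdN'
      omega
    have hPdvdN : P ∣ m - T := by
      have h1 : (P : ℤ) ∣ (m : ℤ) - T := (dvd_sub_comm).1 hPdvdZ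
      have h2 : ((m - T : ℕ) : ℤ) = (m : ℤ) - T := by
        push_cast [Nat.cast_sub hTm]; ring
      exact_mod_cast h2 ▸ h1
    obtain ⟨k, hk⟩ := hPdvdN
    refine ⟨fun i => c i + if i = 0 then k * p 0 else 0, ?_⟩
    have hsum3 : ∑ i, (c i + if i = 0 then k * p 0 else 0) * s i
        = T + k * (p 0 * s 0) := by
      calc ∑ i, (c i + if i = 0 then k * p 0 else 0) * s i
          = ∑ i, (c i * s i + (if i = 0 then k * p 0 else 0) * s i) := by
            apply Finset.sum_congr rfl
            intros
            ring
        _ = T + ∑ i, (if i = 0 then k * p 0 else 0) * s i := by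
            rw [Finset.sum_add_distrib, hT]
        _ = T + k * (p 0 * s 0) := by
            congr 1
            simp [Finset.sum_ite_eq', mul_assoc]
    show m = ∑ i, (c i + if i = 0 then k * p 0 else 0) * s i
    rw [hsum3, hps 0, mul_comm k P, ← hk]
    omega
end

section
/- For distinct primes p < q < r, every integer greater than 2*p*q*r - (p*q + p*r + q*r) is representable as a nonnegative integer combination of q*r, p*r, and p*q. -/
lemma aux_choose (a b : ℕ) (ha : Nat.Prime a) (hb : ¬ a ∣ b) (m : ℕ) :
    ∃ u : ℕ, u < a ∧ (a : ℤ) ∣ (m : ℤ) - u * b := by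
  haveI := Fact.mk ha
  set x : ZMod a := (m : ZMod a) * ((b : ZMod a))⁻¹ with hx
  have hbne : (b : ZMod a) ≠ 0 := by
    simpa [ZMod.natCast_eq_zero_iff] using hb
  refine ⟨x.val, ZMod.val_lt x, ?_⟩
  have : (((m : ℤ) - x.val * b : ℤ) : ZMod a) = 0 := by
    push_cast
    rw [ZMod.natCast_val, ZMod.cast_id, hx]
    field_simp
    ring
  exact (ZMod.intCast_zmod_eq_zero_iff_dvd _ _).mp this

/-- For primes p < q < r, every integer greater than
2pqr - (pq + pr + qr) is a nonnegative integer combination of qr, pr, pq. -/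
theorem representable_above_frobenius (p q r : ℕ)
    (hp : Nat.Prime p) (hq : Nat.Prime q) (hr : Nat.Prime r)
    (hpq : p < q) (hqr : q < r) :
    ∀ m : ℕ, 2 * p * q * r - (p * q + p * r + q * r) < m →
      ∃ u v w : ℕ, m = u * (q * r) + v * (p * r) + w * (p * q) := by
  intro m hm
  have hp2 := hp.two_le
  have hq2 := hq.two_le
  have hr2 := hr.two_le
  have hpq' : p ≠ q := hpq.ne
  have hpr' : p ≠ r := (hpq.trans hqr).ne
  have hqr' : q ≠ r := hqr.ne
  have hcpq : Nat.Coprime p q := (Nat.coprime_primes hp hq).mpr hpq'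
  have hcpr : Nat.Coprime p r := (Nat.coprime_primes hp hr).mpr hpr'
  have hcqr : Nat.Coprime q r := (Nat.coprime_primes hq hr).mpr hqr'
  -- choose u, v, w
  obtain ⟨u, hu, hdu⟩ := aux_choose p (q * r) hp
    (by
      intro h
      rcases (Nat.Prime.dvd_mul hp).mp h with h' | h'
      · exact hpq' (((Nat.prime_dvd_prime_iff_eq hp hq).mp h'))
      · exact hpr' (((Nat.prime_dvd_prime_iff_eq hp hr).mp h'))) m
  obtain ⟨v, hv, hdv⟩ := aux_choose q (p * r) hq
    (by
      intro h
      rcases (Nat.Prime.dvd_mul hq).mp h with h' | h'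
      · exact hpq' (((Nat.prime_dvd_prime_iff_eq hq hp).mp h')).symm
      · exact hqr' (((Nat.prime_dvd_prime_iff_eq hq hr).mp h'))) m
  obtain ⟨w, hw, hdw⟩ := aux_choose r (p * q) hr
    (by
      intro h
      rcases (Nat.Prime.dvd_mul hr).mp h with h' | h'
      · exact hpr' (((Nat.prime_dvd_prime_iff_eq hr hp).mp h')).symm
      · exact hqr' (((Nat.prime_dvd_prime_iff_eq hr hq).mp h')).symm) m
  set D : ℤ := (m : ℤ) - u * (q * r) - v * (p * r) - w * (p * q) with hD
  have hdp : (p : ℤ) ∣ D := by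
    have h1 : (p : ℤ) ∣ (v : ℤ) * (p * r) := ⟨v * r, by ring⟩
    have h2 : (p : ℤ) ∣ (w : ℤ) * (p * q) := ⟨w * q, by ring⟩
    have := hdu
    push_cast at this ⊢
    have : (p : ℤ) ∣ ((m : ℤ) - u * (q * r)) - v * (p * r) - w * (p * q) :=
      dvd_sub (dvd_sub (by push_cast at hdu; exact hdu) h1) h2
    simpa [hD] using this
  have hdq : (q : ℤ) ∣ D := by
    have h1 : (q : ℤ) ∣ (u : ℤ) * (q * r) := ⟨u * r, by ring⟩
    have h2 : (q : ℤ) ∣ (w : ℤ) * (p * q) := ⟨w * p, by ring⟩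
    have h3 : (q : ℤ) ∣ ((m : ℤ) - v * (p * r)) - u * (q * r) - w * (p * q) :=
      dvd_sub (dvd_sub (by push_cast at hdv; exact hdv) h1) h2
    have : ((m : ℤ) - v * (p * r)) - u * (q * r) - w * (p * q) = D := by rw [hD]; ring
    rwa [this] at h3
  have hdr : (r : ℤ) ∣ D := by
    have h1 : (r : ℤ) ∣ (u : ℤ) * (q * r) := ⟨u * q, by ring⟩
    have h2 : (r : ℤ) ∣ (v : ℤ) * (p * r) := ⟨v * p, by ring⟩
    have h3 : (r : ℤ) ∣ ((m : ℤ) - w * (p * q)) - u * (q * r) - v * (p * r) :=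
      dvd_sub (dvd_sub (by push_cast at hdw; exact hdw) h1) h2
    have : ((m : ℤ) - w * (p * q)) - u * (q * r) - v * (p * r) = D := by rw [hD]; ring
    rwa [this] at h3
  have hcpqZ : IsCoprime (p : ℤ) (q : ℤ) := by
    rw [Int.isCoprime_iff_gcd_eq_one]; simpa using hcpq
  have hcprZ : IsCoprime (p : ℤ) (r : ℤ) := by
    rw [Int.isCoprime_iff_gcd_eq_one]; simpa using hcpr
  have hcqrZ : IsCoprime (q : ℤ) (r : ℤ) := by
    rw [Int.isCoprime_iff_gcd_eq_one]; simpa using hcqr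
  have hpqd : (p : ℤ) * q ∣ D := hcpqZ.mul_dvd hdp hdq
  have hpqr_cop : IsCoprime ((p : ℤ) * q) (r : ℤ) := hcprZ.mul_left hcqrZ
  have hpqrd : ((p : ℤ) * q) * r ∣ D := hpqr_cop.mul_dvd hpqd hdr
  obtain ⟨k, hk⟩ := hpqrd
  -- bound: D > -(p*q*r)
  have hsum : p * q + p * r + q * r ≤ 2 * p * q * r := by
    have h1 : 2 * (p * q) ≤ p * q * r := by
      calc 2 * (p * q) = p * q * 2 := by ring
        _ ≤ p * q * r := Nat.mul_le_mul_left _ hr2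
    have h2 : 2 * (p * r) ≤ p * q * r := by
      calc 2 * (p * r) = p * r * 2 := by ring
        _ ≤ p * r * q := Nat.mul_le_mul_left _ hq2
        _ = p * q * r := by ring
    have h3 : 2 * (q * r) ≤ p * q * r := by
      calc 2 * (q * r) = q * r * 2 := by ring
        _ ≤ q * r * p := Nat.mul_le_mul_left _ hp2
        _ = p * q * r := by ring
    have h0 : 0 ≤ p * q * r := Nat.zero_le _
    linarith
  have hm' : 2 * p * q * r + 1 ≤ m + (p * q + p * r + q * r) := by omega
  have hDbound : -((p : ℤ) * q * r) < D := by
    have hmZ : (2 * p * q * r + 1 : ℤ) ≤ (m : ℤ) + (p * q + p * r + q * r) := by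
      exact_mod_cast hm'
    have hu' : (u : ℤ) ≤ (p : ℤ) - 1 := by omega
    have hv' : (v : ℤ) ≤ (q : ℤ) - 1 := by omega
    have hw' : (w : ℤ) ≤ (r : ℤ) - 1 := by omega
    have hqrpos : (0 : ℤ) < (q : ℤ) * r := by positivity
    have hprpos : (0 : ℤ) < (p : ℤ) * r := by positivity
    have hpqpos : (0 : ℤ) < (p : ℤ) * q := by positivity
    have h1 : (u : ℤ) * (q * r) ≤ ((p : ℤ) - 1) * (q * r) :=
      mul_le_mul_of_nonneg_right hu' (le_of_lt hqrpos)
    have h2 : (v : ℤ) * (p * r) ≤ ((q : ℤ) - 1) * (p * r) :=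
      mul_le_mul_of_nonneg_right hv' (le_of_lt hprpos)
    have h3 : (w : ℤ) * (p * q) ≤ ((r : ℤ) - 1) * (p * q) :=
      mul_le_mul_of_nonneg_right hw' (le_of_lt hpqpos)
    have e1 : ((p : ℤ) - 1) * (q * r) = (p : ℤ) * q * r - q * r := by ring
    have e2 : ((q : ℤ) - 1) * (p * r) = (p : ℤ) * q * r - p * r := by ring
    have e3 : ((r : ℤ) - 1) * (p * q) = (p : ℤ) * q * r - p * q := by ring
    rw [hD]
    linarith
  have hkpos : 0 ≤ k := by
    by_contra hneg
    push_neg at hneg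
    have hk1 : k ≤ -1 := by omega
    have : D ≤ -((p : ℤ) * q * r) := by
      rw [hk]
      calc (p : ℤ) * q * r * k ≤ (p : ℤ) * q * r * (-1) := by
            apply mul_le_mul_of_nonneg_left hk1 (by positivity)
        _ = -((p : ℤ) * q * r) := by ring
    linarith
  refine ⟨u + k.toNat * p, v, w, ?_⟩
  have hkt : (k.toNat : ℤ) = k := Int.toNat_of_nonneg hkpos
  have : (m : ℤ) = (u + k.toNat * p) * (q * r) + v * (p * r) + w * (p * q) := by
    have : D = (p : ℤ) * q * r * k := hk
    rw [hD] at this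
    push_cast [hkt]
    linarith [this]
  exact_mod_cast this
end

section
/- Let q, r, s be positive integers with r < s, gcd(r,s) = 1, and gcd(qs, qr, rs) = 1. Then the Frobenius number g(qs, qr, rs) equals 2*q*r*s - (q*r + q*s + r*s). -/
set_option maxHeartbeats 1000000

lemma mod_pick (a q : ℕ) (hq : 0 < q) (h : Nat.Coprime a q) (m : ℤ) :
    ∃ c : ℕ, c < q ∧ (q:ℤ) ∣ m - (c:ℤ) * a := by
  have h' : IsCoprime (a : ℤ) (q : ℤ) := by
    rw [Int.isCoprime_iff_gcd_eq_one]; exact_mod_cast h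
  obtain ⟨x, y, hxy⟩ := h'
  have hq' : (0:ℤ) < q := by exact_mod_cast hq
  have hnn : 0 ≤ (x*m) % q := Int.emod_nonneg _ (by positivity)
  have hlt : (x*m) % q < q := Int.emod_lt_of_pos _ hq'
  refine ⟨((x*m) % q).toNat, ?_, ?_⟩
  · omega
  · rw [Int.toNat_of_nonneg hnn]
    have hdef : (x*m) % q = x*m - q * ((x*m)/q) := by
      rw [Int.emod_def]
    refine ⟨m*y + ((x*m)/q) * a, ?_⟩
    rw [hdef]
    linear_combination (-m) * hxy

lemma sylvester_nonrep (r s : ℕ) (hr : 0 < r) (hs : 0 < s) (hco : Nat.gcd r s = 1) :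
    ¬ ∃ u v : ℕ, ((r:ℤ)*s - r - s) = u * r + v * s := by
  rintro ⟨u, v, huv⟩
  have hco' : IsCoprime (r:ℤ) (s:ℤ) := by
    rw [Int.isCoprime_iff_gcd_eq_one]; exact_mod_cast hco
  have h1 : (r:ℤ)*s = (u+1) * r + (v+1) * s := by linarith
  have hsdvd : (s:ℤ) ∣ (u+1) * r := ⟨r - (v+1), by linarith⟩
  have hs1 : (s:ℤ) ∣ (u+1) := (hco'.symm.dvd_of_dvd_mul_right hsdvd)
  have hrdvd : (r:ℤ) ∣ (v+1) * s := ⟨s - (u+1), by linarith⟩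
  have hr1 : (r:ℤ) ∣ (v+1) := (hco'.dvd_of_dvd_mul_right hrdvd)
  have hu : (s:ℤ) ≤ u + 1 := Int.le_of_dvd (by positivity) hs1
  have hv : (r:ℤ) ≤ v + 1 := Int.le_of_dvd (by positivity) hr1
  have hrp : (0:ℤ) < r := by exact_mod_cast hr
  have hsp : (0:ℤ) < s := by exact_mod_cast hs
  nlinarith [mul_le_mul hu (le_refl (r:ℤ)) (le_of_lt hrp) (by linarith),
    mul_le_mul hv (le_refl (s:ℤ)) (le_of_lt hsp) (by linarith)]

lemma sylvester_rep (r s : ℕ) (hr : 0 < r) (hs : 0 < s) (hco : Nat.gcd r s = 1)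
    (n : ℤ) (hn : (r:ℤ)*s - r - s < n) : ∃ u v : ℕ, n = u * r + v * s := by
  obtain ⟨u, hu, hdvd⟩ := mod_pick r s hs hco n
  obtain ⟨v', hv'⟩ := hdvd
  have hsp : (0:ℤ) < s := by exact_mod_cast hs
  have hup : (u:ℤ) < s := by exact_mod_cast hu
  have hv'nn : 0 ≤ v' := by
    nlinarith [hv', mul_le_mul (by linarith : (u:ℤ) ≤ s - 1) (le_refl (r:ℤ))
      (by positivity) (by linarith)]
  refine ⟨u, v'.toNat, ?_⟩
  rw [Int.toNat_of_nonneg hv'nn]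
  linarith [hv']

/-- `m` is a nonnegative integer combination of `x`, `y`, `z`. -/
def Representable3 (x y z : ℕ) (m : ℤ) : Prop :=
  ∃ u v w : ℕ, m = (u : ℤ) * x + (v : ℤ) * y + (w : ℤ) * z

/-- `g` is the Frobenius number of `{x, y, z}`. -/
def IsFrob3 (x y z : ℕ) (g : ℤ) : Prop :=
  ¬ Representable3 x y z g ∧ ∀ m : ℤ, g < m → Representable3 x y z m

/-- For positive q, r, s with r < s, gcd(r,s) = 1 and
gcd(qs, qr, rs) = 1, we have g(qs, qr, rs) = 2qrs - (qr + qs + rs). -/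
theorem frobenius_qs_qr_rs (q r s : ℕ) (hq : 0 < q) (hr : 0 < r) (hs : 0 < s)
    (hrs : r < s) (hco : Nat.gcd r s = 1)
    (hgcd : Nat.gcd (q * s) (Nat.gcd (q * r) (r * s)) = 1) :
    IsFrob3 (q * s) (q * r) (r * s)
      (2 * (q : ℤ) * r * s - ((q : ℤ) * r + (q : ℤ) * s + (r : ℤ) * s)) := by
  have hqrs : Nat.Coprime (r * s) q := by
    have hd : Nat.gcd (r*s) q ∣ 1 := by
      rw [← hgcd]
      refine Nat.dvd_gcd ?_ (Nat.dvd_gcd ?_ ?_)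
      · exact dvd_mul_of_dvd_left (Nat.gcd_dvd_right _ _) s
      · exact dvd_mul_of_dvd_left (Nat.gcd_dvd_right _ _) r
      · exact Nat.gcd_dvd_left _ _
    exact Nat.dvd_one.mp hd
  have hcoI : IsCoprime ((q:ℤ)) ((r:ℤ)*s) := by
    rw [Int.isCoprime_iff_gcd_eq_one]
    have := hqrs.symm
    rw [Nat.Coprime] at this
    rw [Int.gcd]
    simpa [Int.natAbs_mul] using this
  have hqp : (0:ℤ) < q := by exact_mod_cast hq
  have hrp : (0:ℤ) < r := by exact_mod_cast hr
  have hsp : (0:ℤ) < s := by exact_mod_cast hs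
  constructor
  · rintro ⟨a, b, c, habc⟩
    push_cast at habc
    have key : (q:ℤ) ∣ ((c:ℤ)+1) * ((r:ℤ)*s) :=
      ⟨2*r*s - r - s - a*s - b*r, by linear_combination -habc⟩
    have hq1 : (q:ℤ) ∣ ((c:ℤ)+1) := hcoI.dvd_of_dvd_mul_right key
    obtain ⟨k, hk⟩ := hq1
    have hk1 : 1 ≤ k := by nlinarith
    have hk2 : k < 2 := by
      by_contra hk2
      push_neg at hk2
      have : ((c:ℤ)+1) ≥ 2*q := by nlinarith
      nlinarith [mul_le_mul_of_nonneg_right this (by positivity : (0:ℤ) ≤ (r:ℤ)*s),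
        mul_nonneg (Nat.cast_nonneg a : (0:ℤ) ≤ a) hsp.le,
        mul_nonneg (Nat.cast_nonneg b : (0:ℤ) ≤ b) hrp.le,
        mul_pos hqp hrp, mul_pos hqp hsp]
    have hk3 : k = 1 := by nlinarith
    have hc : (c:ℤ) + 1 = q := by rw [hk, hk3, mul_one]
    have heq : (r:ℤ)*s - r - s = (b:ℤ)*r + (a:ℤ)*s := by
      have h2 : (q:ℤ) * ((r:ℤ)*s - r - s) = q * ((b:ℤ)*r + (a:ℤ)*s) := by
        linear_combination habc + ((r:ℤ)*s) * hc
      exact mul_left_cancel₀ (ne_of_gt hqp) h2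
    exact sylvester_nonrep r s hr hs hco ⟨b, a, heq⟩
  · intro m hm
    obtain ⟨c, hc, hdvd⟩ := mod_pick (r*s) q hq hqrs m
    push_cast at hdvd
    obtain ⟨n, hn⟩ := hdvd
    have hcq : (c:ℤ) < q := by exact_mod_cast hc
    have hngt : (r:ℤ)*s - r - s < n := by
      have hprod : (c:ℤ) * ((r:ℤ)*s) ≤ ((q:ℤ) - 1) * ((r:ℤ)*s) :=
        mul_le_mul_of_nonneg_right (by linarith) (by positivity)
      have h1 : (q:ℤ) * ((r:ℤ)*s - r - s) < q * n := by linarith [hn, hm, hprod]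
      exact lt_of_mul_lt_mul_left h1 hqp.le
    obtain ⟨u, v, huv⟩ := sylvester_rep r s hr hs hco n hngt
    refine ⟨v, u, c, ?_⟩
    push_cast
    linear_combination hn + (q:ℤ) * huv
end

section
/- Let p1 < p2 < ... < p(n+1) be primes, and for a subset {i1 < ... < i(k+1)} of {1,...,n+1} let G(i1,...,i(k+1)) denote the Frobenius number of the set {Q/p(i_j) : j = 1,...,k+1} where Q = p(i1)*...*p(i(k+1)). Then for each fixed k, G(n-k+1, ..., n+1) ≥ G(i1, ..., i(k+1)) for every subset of size k+1, i.e., the subset consisting of the k+1 largest primes maximizes the Frobenius number. -/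
/-- `m` is a nonnegative integer combination of the numbers `Q/p i` for `i ∈ S`,
where `Q` is the product of the `p i` over `S`. -/
def RepSub {n : ℕ} (p : Fin n → ℕ) (S : Finset (Fin n)) (m : ℕ) : Prop :=
  ∃ c : Fin n → ℕ, m = ∑ i ∈ S, c i * ((∏ j ∈ S, p j) / p i)

/-- `g` is the Frobenius number of the set `{Q/p i : i ∈ S}`. -/
def IsFrobSub {n : ℕ} (p : Fin n → ℕ) (S : Finset (Fin n)) (g : ℕ) : Prop :=
  ¬ RepSub p S g ∧ ∀ m : ℕ, g < m → RepSub p S m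

/-- Integer-valued Frobenius formula. -/
def FZ {N : ℕ} (p : Fin N → ℕ) (S : Finset (Fin N)) : ℤ :=
  (∑ i ∈ S, ((p i : ℤ) - 1) * ∏ j ∈ S.erase i, (p j : ℤ)) - ∏ j ∈ S, (p j : ℤ)

lemma fz_insert {N : ℕ} (p : Fin N → ℕ) {E : Finset (Fin N)} {i : Fin N} (hi : i ∉ E) :
    FZ p (insert i E) =
      (p i : ℤ) * (∑ l ∈ E, ((p l : ℤ) - 1) * ∏ m ∈ E.erase l, (p m : ℤ))
        - ∏ l ∈ E, (p l : ℤ) := by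
  unfold FZ
  rw [Finset.sum_insert hi, Finset.erase_insert hi, Finset.prod_insert hi]
  have h : ∀ l ∈ E, ((p l : ℤ) - 1) * ∏ m ∈ (insert i E).erase l, (p m : ℤ)
      = (p i : ℤ) * (((p l : ℤ) - 1) * ∏ m ∈ E.erase l, (p m : ℤ)) := by
    intro l hl
    have hli : l ≠ i := fun h => hi (h ▸ hl)
    rw [Finset.erase_insert_of_ne hli.symm,
      Finset.prod_insert (fun h => hi (Finset.mem_of_mem_erase h))]
    ring
  rw [Finset.sum_congr rfl h, ← Finset.mul_sum]
  ring

lemma W_nonneg {N : ℕ} (p : Fin N → ℕ) (hp : ∀ i, Nat.Prime (p i)) (E : Finset (Fin N)) :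
    0 ≤ ∑ l ∈ E, ((p l : ℤ) - 1) * ∏ m ∈ E.erase l, (p m : ℤ) := by
  refine Finset.sum_nonneg fun l _ => mul_nonneg ?_ (Finset.prod_nonneg fun m _ => by positivity)
  have := (hp l).two_le
  omega

lemma fz_swap {N : ℕ} (p : Fin N → ℕ) (hp : ∀ i, Nat.Prime (p i)) {S : Finset (Fin N)}
    {i j : Fin N} (hi : i ∈ S) (hj : j ∉ S) (hij : p i ≤ p j) :
    FZ p S ≤ FZ p (insert j (S.erase i)) := by
  have hiE : i ∉ S.erase i := Finset.notMem_erase i S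
  have hjE : j ∉ S.erase i := fun h => hj (Finset.mem_of_mem_erase h)
  have hS : S = insert i (S.erase i) := (Finset.insert_erase hi).symm
  rw [fz_insert p hjE]
  conv_lhs => rw [hS, fz_insert p hiE]
  have hW := W_nonneg p hp (S.erase i)
  have : (p i : ℤ) ≤ (p j : ℤ) := by exact_mod_cast hij
  nlinarith

lemma fz_nonneg {N : ℕ} (p : Fin N → ℕ) (hp : ∀ i, Nat.Prime (p i)) {S : Finset (Fin N)}
    (hS : 2 ≤ S.card) : 0 ≤ FZ p S := by
  have hne : S.Nonempty := Finset.card_pos.mp (by omega)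
  obtain ⟨i, hi⟩ := hne
  have hE : 1 ≤ (S.erase i).card := by
    have := Finset.card_erase_of_mem hi; omega
  have hne2 : (S.erase i).Nonempty := Finset.card_pos.mp (by omega)
  obtain ⟨j, hj⟩ := hne2
  have hiE : i ∉ S.erase i := Finset.notMem_erase i S
  have hSi : S = insert i (S.erase i) := (Finset.insert_erase hi).symm
  rw [hSi, fz_insert p hiE]
  have hprodE : ∏ l ∈ S.erase i, (p l : ℤ)
      = (p j : ℤ) * ∏ m ∈ (S.erase i).erase j, (p m : ℤ) :=
    (Finset.mul_prod_erase (S.erase i) (fun m => (p m : ℤ)) hj).symm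
  have hWlb : ((p j : ℤ) - 1) * ∏ m ∈ (S.erase i).erase j, (p m : ℤ)
      ≤ ∑ l ∈ S.erase i, ((p l : ℤ) - 1) * ∏ m ∈ (S.erase i).erase l, (p m : ℤ) := by
    refine Finset.single_le_sum (f := fun l => ((p l : ℤ) - 1) * ∏ m ∈ (S.erase i).erase l, (p m : ℤ)) (fun l _ => ?_) hj
    refine mul_nonneg ?_ (Finset.prod_nonneg fun m _ => by positivity)
    have := (hp l).two_le; omega
  have hD0 : (0 : ℤ) ≤ ∏ m ∈ (S.erase i).erase j, (p m : ℤ) :=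
    Finset.prod_nonneg fun m _ => by positivity
  have h2i : (2 : ℤ) ≤ (p i : ℤ) := by exact_mod_cast (hp i).two_le
  have h2j : (2 : ℤ) ≤ (p j : ℤ) := by exact_mod_cast (hp j).two_le
  have h1 := mul_le_mul_of_nonneg_left hWlb (by linarith : (0:ℤ) ≤ (p i : ℤ))
  have h2 : (0:ℤ) ≤ (((p i : ℤ) - 2) * ((p j : ℤ) - 1) + ((p j : ℤ) - 2))
      * ∏ m ∈ (S.erase i).erase j, (p m : ℤ) := by
    refine mul_nonneg ?_ hD0
    nlinarith
  rw [hprodE]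
  nlinarith [h1, h2]

lemma Qdiv {N : ℕ} (p : Fin N → ℕ) (hp : ∀ i, Nat.Prime (p i)) {S : Finset (Fin N)}
    {i : Fin N} (hi : i ∈ S) :
    (∏ j ∈ S, p j) / p i = ∏ j ∈ S.erase i, p j := by
  rw [← Finset.mul_prod_erase S p hi, Nat.mul_div_cancel_left _ (hp i).pos]

lemma not_dvd_Qe {N : ℕ} (p : Fin N → ℕ) (hp : ∀ i, Nat.Prime (p i))
    (hinj : Function.Injective p) {S : Finset (Fin N)} {i : Fin N} :
    ¬ p i ∣ ∏ j ∈ S.erase i, p j := by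
  intro h
  obtain ⟨l, hl, hdl⟩ := (hp i).prime.exists_mem_finset_dvd h
  have : p i = p l := (Nat.prime_dvd_prime_iff_eq (hp i) (hp l)).mp hdl
  exact Finset.ne_of_mem_erase hl (hinj this).symm

lemma prod_dvd_of_dvd {N : ℕ} (p : Fin N → ℕ) (hp : ∀ i, Nat.Prime (p i))
    (hinj : Function.Injective p) {S : Finset (Fin N)} {z : ℕ}
    (h : ∀ i ∈ S, p i ∣ z) : (∏ i ∈ S, p i) ∣ z := by
  have himg : ∏ q ∈ S.image p, q = ∏ i ∈ S, p i :=
    Finset.prod_image (fun i _ j _ h => hinj h)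
  rw [← himg]
  refine Finset.prod_primes_dvd z (fun q hq => ?_) (fun q hq => ?_)
  · obtain ⟨i, _, rfl⟩ := Finset.mem_image.mp hq
    exact (hp i).prime
  · obtain ⟨i, hi, rfl⟩ := Finset.mem_image.mp hq
    exact h i hi

lemma fz_cast {N : ℕ} (p : Fin N → ℕ) (hp : ∀ i, Nat.Prime (p i)) {S : Finset (Fin N)}
    (hS : 2 ≤ S.card) :
    ((FZ p S).toNat : ℤ) + ∏ j ∈ S, (p j : ℤ)
      = ∑ i ∈ S, ((p i : ℤ) - 1) * ∏ j ∈ S.erase i, (p j : ℤ) := by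
  rw [Int.toNat_of_nonneg (fz_nonneg p hp hS)]
  unfold FZ
  ring

lemma rep_cast {N : ℕ} (p : Fin N → ℕ) (hp : ∀ i, Nat.Prime (p i)) {S : Finset (Fin N)}
    {m : ℕ} (h : RepSub p S m) :
    ∃ c : Fin N → ℕ, (m : ℤ) = ∑ i ∈ S, (c i : ℤ) * ∏ j ∈ S.erase i, (p j : ℤ) := by
  obtain ⟨c, hc⟩ := h
  refine ⟨c, ?_⟩
  have hc2 : m = ∑ i ∈ S, c i * ∏ j ∈ S.erase i, p j := by
    rw [hc]
    exact Finset.sum_congr rfl fun i hi => by rw [Qdiv p hp hi]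
  rw [hc2]
  push_cast
  rfl

lemma frob_formula_not_rep {N : ℕ} (p : Fin N → ℕ) (hp : ∀ i, Nat.Prime (p i))
    (hinj : Function.Injective p) {S : Finset (Fin N)} (hS : 2 ≤ S.card) :
    ¬ RepSub p S (FZ p S).toNat := by
  intro h
  obtain ⟨c, hc⟩ := rep_cast p hp h
  have hgQ := fz_cast p hp hS
  -- key sum identity
  have hidentity : ∑ l ∈ S, ((c l : ℤ) + 1 - p l) * ∏ j ∈ S.erase l, (p j : ℤ)
      = - ∏ j ∈ S, (p j : ℤ) := by
    have expand : ∀ l ∈ S, ((c l : ℤ) + 1 - p l) * ∏ j ∈ S.erase l, (p j : ℤ)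
        = (c l : ℤ) * ∏ j ∈ S.erase l, (p j : ℤ)
          - ((p l : ℤ) - 1) * ∏ j ∈ S.erase l, (p j : ℤ) := fun l _ => by ring
    rw [Finset.sum_congr rfl expand, Finset.sum_sub_distrib]
    linarith [hc, hgQ]
  have hkey : ∀ i ∈ S, p i ∣ c i + 1 := by
    intro i hi
    have hsplit : ((c i : ℤ) + 1 - p i) * ∏ j ∈ S.erase i, (p j : ℤ)
        = - ∏ j ∈ S, (p j : ℤ)
          - ∑ l ∈ S.erase i, ((c l : ℤ) + 1 - p l) * ∏ j ∈ S.erase l, (p j : ℤ) := by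
      rw [← hidentity, ← Finset.add_sum_erase S _ hi]
      ring
    have hdvd1 : (p i : ℤ) ∣ ((c i : ℤ) + 1 - p i) * ∏ j ∈ S.erase i, (p j : ℤ) := by
      rw [hsplit]
      refine dvd_sub (dvd_neg.mpr ?_) (Finset.dvd_sum fun l hl => ?_)
      · exact Finset.dvd_prod_of_mem (fun j => (p j : ℤ)) hi
      · refine Dvd.dvd.mul_left ?_ _
        have hil : i ∈ S.erase l :=
          Finset.mem_erase.mpr ⟨fun h => Finset.ne_of_mem_erase hl h.symm, hi⟩
        exact Finset.dvd_prod_of_mem (fun j => (p j : ℤ)) hil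
    have hnd : ¬ (p i : ℤ) ∣ ∏ j ∈ S.erase i, (p j : ℤ) := by
      intro hcon
      apply not_dvd_Qe p hp hinj (S := S) (i := i)
      have : ((∏ j ∈ S.erase i, p j : ℕ) : ℤ) = ∏ j ∈ S.erase i, (p j : ℤ) := by push_cast; rfl
      rw [← this] at hcon
      exact_mod_cast hcon
    have hpr : Prime (p i : ℤ) := Nat.prime_iff_prime_int.mp (hp i)
    have hdvd2 : (p i : ℤ) ∣ (c i : ℤ) + 1 - p i := (hpr.dvd_mul.mp hdvd1).resolve_right hnd
    have hdvd3 : (p i : ℤ) ∣ (c i : ℤ) + 1 := by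
      have := dvd_add hdvd2 (dvd_refl (p i : ℤ))
      simpa using this
    exact_mod_cast hdvd3
  have hbound : ∑ l ∈ S, ((p l : ℤ) - 1) * ∏ j ∈ S.erase l, (p j : ℤ)
      ≤ ∑ l ∈ S, (c l : ℤ) * ∏ j ∈ S.erase l, (p j : ℤ) := by
    refine Finset.sum_le_sum fun l hl => ?_
    refine mul_le_mul_of_nonneg_right ?_ (Finset.prod_nonneg fun j _ => by positivity)
    have h1 : p l ≤ c l + 1 := Nat.le_of_dvd (Nat.succ_pos _) (hkey l hl)
    have : (p l : ℤ) ≤ (c l : ℤ) + 1 := by exact_mod_cast h1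
    linarith
  have hQpos : (0 : ℤ) < ∏ j ∈ S, (p j : ℤ) :=
    Finset.prod_pos fun j _ => by exact_mod_cast (hp j).pos
  linarith [hc, hgQ, hbound, hQpos]

lemma frob_formula_rep {N : ℕ} (p : Fin N → ℕ) (hp : ∀ i, Nat.Prime (p i))
    (hinj : Function.Injective p) {S : Finset (Fin N)} (hS : 2 ≤ S.card)
    {m : ℕ} (hm : (FZ p S).toNat < m) : RepSub p S m := by
  classical
  set c : Fin N → ℕ := fun l =>
    ZMod.val ((m : ZMod (p l)) * (((∏ j ∈ S.erase l, p j : ℕ) : ZMod (p l)))⁻¹) with hcdef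
  have hclt : ∀ l, c l < p l := by
    intro l
    haveI : NeZero (p l) := ⟨(hp l).pos.ne'⟩
    exact ZMod.val_lt _
  have hQe : ∀ l : Fin N, ((∏ j ∈ S.erase l, p j : ℕ) : ℤ) = ∏ j ∈ S.erase l, (p j : ℤ) :=
    fun l => by push_cast; rfl
  have hdvd : ∀ l ∈ S, (p l : ℤ) ∣ (m : ℤ) - (c l : ℤ) * ∏ j ∈ S.erase l, (p j : ℤ) := by
    intro l hl
    haveI := Fact.mk (hp l)
    have hne : (((∏ j ∈ S.erase l, p j : ℕ) : ZMod (p l))) ≠ 0 :=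
      fun h => not_dvd_Qe p hp hinj ((ZMod.natCast_eq_zero_iff _ _).mp h)
    rw [← hQe l, ← ZMod.intCast_zmod_eq_zero_iff_dvd]
    rw [Int.cast_sub, Int.cast_mul, Int.cast_natCast, Int.cast_natCast, Int.cast_natCast]
    rw [hcdef]
    simp only [ZMod.natCast_val, ZMod.cast_id]
    rw [mul_assoc, inv_mul_cancel₀ hne, mul_one, sub_self]
  set z : ℤ := (m : ℤ) - ∑ l ∈ S, (c l : ℤ) * ∏ j ∈ S.erase l, (p j : ℤ) with hzdef
  have hpz : ∀ i ∈ S, (p i : ℤ) ∣ z := by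
    intro i hi
    have hsplit : z = ((m : ℤ) - (c i : ℤ) * ∏ j ∈ S.erase i, (p j : ℤ))
        - ∑ l ∈ S.erase i, (c l : ℤ) * ∏ j ∈ S.erase l, (p j : ℤ) := by
      rw [hzdef, ← Finset.add_sum_erase S _ hi]
      ring
    rw [hsplit]
    refine dvd_sub (hdvd i hi) (Finset.dvd_sum fun l hl => ?_)
    refine Dvd.dvd.mul_left ?_ _
    have hil : i ∈ S.erase l :=
      Finset.mem_erase.mpr ⟨fun h => Finset.ne_of_mem_erase hl h.symm, hi⟩
    exact Finset.dvd_prod_of_mem (fun j => (p j : ℤ)) hil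
  have hQz : ((∏ j ∈ S, p j : ℕ) : ℤ) ∣ z := by
    have hnat : (∏ j ∈ S, p j) ∣ z.natAbs := by
      refine prod_dvd_of_dvd p hp hinj fun i hi => ?_
      have := Int.natAbs_dvd_natAbs.mpr (hpz i hi)
      simpa using this
    exact dvd_trans (Int.natCast_dvd_natCast.mpr hnat) (Int.natAbs_dvd.mpr dvd_rfl)
  have hQpos : (0 : ℤ) < ((∏ j ∈ S, p j : ℕ) : ℤ) := by
    exact_mod_cast Finset.prod_pos fun j _ => (hp j).pos
  have hQcast : ((∏ j ∈ S, p j : ℕ) : ℤ) = ∏ j ∈ S, (p j : ℤ) := by push_cast; rfl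
  have hbound : ∑ l ∈ S, (c l : ℤ) * ∏ j ∈ S.erase l, (p j : ℤ)
      ≤ ∑ l ∈ S, ((p l : ℤ) - 1) * ∏ j ∈ S.erase l, (p j : ℤ) := by
    refine Finset.sum_le_sum fun l hl => ?_
    refine mul_le_mul_of_nonneg_right ?_ (Finset.prod_nonneg fun j _ => by positivity)
    have := hclt l
    have : (c l : ℤ) < (p l : ℤ) := by exact_mod_cast this
    linarith
  have hmg : ((FZ p S).toNat : ℤ) < (m : ℤ) := by exact_mod_cast hm
  have hzlb : -((∏ j ∈ S, p j : ℕ) : ℤ) < z := by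
    have := fz_cast p hp hS
    rw [hzdef, hQcast]
    linarith
  have hz0 : 0 ≤ z := by
    by_contra hneg
    push_neg at hneg
    have h1 : ((∏ j ∈ S, p j : ℕ) : ℤ) ∣ -z := (hQz).neg_right
    have h2 : ((∏ j ∈ S, p j : ℕ) : ℤ) ≤ -z := Int.le_of_dvd (by linarith) h1
    linarith
  -- now produce the representation
  have hmeq : m = (∑ l ∈ S, c l * ∏ j ∈ S.erase l, p j) + z.toNat := by
    have : (m : ℤ) = ((∑ l ∈ S, c l * ∏ j ∈ S.erase l, p j : ℕ) : ℤ) + z.toNat := by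
      rw [Int.toNat_of_nonneg hz0, hzdef]
      push_cast
      ring
    exact_mod_cast this
  have hQznat : (∏ j ∈ S, p j) ∣ z.toNat := by
    have : ((∏ j ∈ S, p j : ℕ) : ℤ) ∣ (z.toNat : ℤ) := by
      rw [Int.toNat_of_nonneg hz0]; exact hQz
    exact_mod_cast this
  have hne : S.Nonempty := Finset.card_pos.mp (by omega)
  obtain ⟨i0, hi0⟩ := hne
  set e : ℕ := z.toNat / (∏ j ∈ S, p j) * p i0 with hedef
  have hQn : ∏ j ∈ S, p j = p i0 * ∏ j ∈ S.erase i0, p j :=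
    (Finset.mul_prod_erase S p hi0).symm
  have heQ : e * ∏ j ∈ (S.erase i0), p j = z.toNat := by
    rw [hedef, mul_assoc, ← hQn]
    exact Nat.div_mul_cancel hQznat
  refine ⟨fun l => if l = i0 then c l + e else c l, ?_⟩
  have hsum : ∑ l ∈ S, (if l = i0 then c l + e else c l) * ((∏ j ∈ S, p j) / p l)
      = ∑ l ∈ S, (if l = i0 then c l + e else c l) * ∏ j ∈ S.erase l, p j :=
    Finset.sum_congr rfl fun l hl => by rw [Qdiv p hp hl]
  rw [hsum]
  have hsplit2 : ∀ l ∈ S, (if l = i0 then c l + e else c l) * ∏ j ∈ S.erase l, p j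
      = c l * ∏ j ∈ S.erase l, p j + (if l = i0 then e * ∏ j ∈ S.erase l, p j else 0) := by
    intro l _
    split_ifs <;> ring
  rw [Finset.sum_congr rfl hsplit2, Finset.sum_add_distrib,
    Finset.sum_ite_eq' S i0 (fun l => e * ∏ j ∈ S.erase l, p j), if_pos hi0, heQ]
  exact hmeq

lemma isFrob_formula {N : ℕ} (p : Fin N → ℕ) (hp : ∀ i, Nat.Prime (p i))
    (hinj : Function.Injective p) {S : Finset (Fin N)} (hS : 2 ≤ S.card) :
    IsFrobSub p S (FZ p S).toNat :=
  ⟨frob_formula_not_rep p hp hinj hS, fun _ hm => frob_formula_rep p hp hinj hS hm⟩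

lemma frob_unique_s6 {N : ℕ} {p : Fin N → ℕ} {S : Finset (Fin N)} {g g' : ℕ}
    (h : IsFrobSub p S g) (h' : IsFrobSub p S g') : g = g' := by
  by_contra hne
  rcases Nat.lt_or_ge g g' with hlt | hge
  · exact h'.1 (h.2 g' hlt)
  · exact h.1 (h'.2 g (lt_of_le_of_ne hge (Ne.symm hne)))

/-- among all (k+1)-subsets of the primes p1 < ... < p(n+1),
the subset of the k+1 largest primes maximizes the Frobenius number of
the associated set {Q/p(i_j)}. -/
theorem frobenius_top_subset_max (n : ℕ) (hn : 1 ≤ n) (p : Fin (n + 1) → ℕ)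
    (hp : ∀ i, Nat.Prime (p i)) (hmono : StrictMono p)
    (k : ℕ) (hk1 : 1 ≤ k) (hkn : k ≤ n)
    (S : Finset (Fin (n + 1))) (hS : S.card = k + 1)
    (g g' : ℕ)
    (hg : IsFrobSub p (Finset.univ.filter (fun i => n - k ≤ i.val)) g)
    (hg' : IsFrobSub p S g') :
    g' ≤ g := by
  classical
  set T : Finset (Fin (n + 1)) := Finset.univ.filter (fun i => n - k ≤ i.val) with hTdef
  have hinj : Function.Injective p := hmono.injective
  -- cardinality of T
  have hTcard : T.card = k + 1 := by
    have himg : T.image Fin.val = Finset.Ico (n - k) (n + 1) := by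
      ext x
      simp only [Finset.mem_image, Finset.mem_Ico, hTdef, Finset.mem_filter,
        Finset.mem_univ, true_and]
      constructor
      · rintro ⟨i, hi, rfl⟩
        exact ⟨hi, i.isLt⟩
      · rintro ⟨h1, h2⟩
        exact ⟨⟨x, h2⟩, h1, rfl⟩
    have hcardimg : (T.image Fin.val).card = T.card :=
      Finset.card_image_of_injective T Fin.val_injective
    rw [← hcardimg, himg, Nat.card_Ico]
    omega
  -- comparison of FZ values
  have hcomp : ∀ d : ℕ, ∀ S' : Finset (Fin (n + 1)), S'.card = k + 1 →
      (S' \ T).card = d → FZ p S' ≤ FZ p T := by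
    intro d
    induction d using Nat.strong_induction_on with
    | _ d ih =>
      intro S' hcard hd
      by_cases hST : S' = T
      · rw [hST]
      · have hTS : (T \ S').Nonempty := by
          rw [Finset.sdiff_nonempty]
          intro hsub
          exact hST (Finset.eq_of_subset_of_card_le hsub (by omega)).symm
        have hSTne : (S' \ T).Nonempty := by
          rw [Finset.sdiff_nonempty]
          intro hsub
          exact hST (Finset.eq_of_subset_of_card_le hsub (by omega))
        obtain ⟨i, hiST⟩ := hSTne
        obtain ⟨j, hjTS⟩ := hTS
        have hiS : i ∈ S' := (Finset.mem_sdiff.mp hiST).1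
        have hiT : i ∉ T := (Finset.mem_sdiff.mp hiST).2
        have hjT : j ∈ T := (Finset.mem_sdiff.mp hjTS).1
        have hjS : j ∉ S' := (Finset.mem_sdiff.mp hjTS).2
        have hival : i.val < n - k := by
          by_contra hcon
          exact hiT (by simp [hTdef]; omega)
        have hjval : n - k ≤ j.val := by
          have := hjT
          simp [hTdef] at this
          omega
        have hij : p i ≤ p j :=
          le_of_lt (hmono (show i < j from by
            rw [Fin.lt_def]; omega))
        have hstep := fz_swap p hp hiS hjS hij
        have hjE : j ∉ S'.erase i := fun h => hjS (Finset.mem_of_mem_erase h)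
        have hS'card : (insert j (S'.erase i)).card = k + 1 := by
          rw [Finset.card_insert_of_notMem hjE, Finset.card_erase_of_mem hiS]
          omega
        have hsd : (insert j (S'.erase i)) \ T = (S' \ T).erase i := by
          ext x
          simp only [Finset.mem_sdiff, Finset.mem_insert, Finset.mem_erase]
          constructor
          · rintro ⟨hx1 | ⟨hx2, hx3⟩, hx4⟩
            · exact absurd (hx1 ▸ hjT) hx4
            · exact ⟨hx2, hx3, hx4⟩
          · rintro ⟨hx1, hx2, hx3⟩
            exact ⟨Or.inr ⟨hx1, hx2⟩, hx3⟩
        have hdlt : ((insert j (S'.erase i)) \ T).card < d := by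
          rw [hsd, Finset.card_erase_of_mem hiST, hd]
          have : 0 < (S' \ T).card := Finset.card_pos.mpr ⟨i, hiST⟩
          omega
        exact le_trans hstep (ih _ hdlt _ hS'card rfl)
  have hS2 : 2 ≤ S.card := by omega
  have hT2 : 2 ≤ T.card := by omega
  have hgT : g = (FZ p T).toNat := frob_unique_s6 hg (isFrob_formula p hp hinj hT2)
  have hgS : g' = (FZ p S).toNat := frob_unique_s6 hg' (isFrob_formula p hp hinj hS2)
  rw [hgT, hgS]
  exact Int.toNat_le_toNat (hcomp _ S hS rfl)
end

section
/- Let p1 < ... < p(n+1) be primes and for 1 ≤ k ≤ n let G_k be the Frobenius number of {R/p(n-k+1+j) : j = 0,...,k} where R = p(n-k+1)*...*p(n+1). Then G_(k+1) > G_k for all 1 ≤ k ≤ n-1; in particular the maximum over all k is attained at k = n. -/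
/-- letting G_k be the Frobenius number associated to the
top k+1 primes among p1 < ... < p(n+1), we have G_(k+1) > G_k for 1 ≤ k ≤ n-1. -/
theorem frobenius_top_strict_mono (n : ℕ) (hn : 2 ≤ n) (p : Fin (n + 1) → ℕ)
    (hp : ∀ i, Nat.Prime (p i)) (hmono : StrictMono p)
    (k : ℕ) (hk1 : 1 ≤ k) (hkn : k ≤ n - 1)
    (g g' : ℕ)
    (hg : IsFrobSub p (Finset.univ.filter (fun i => n - k ≤ i.val)) g)
    (hg' : IsFrobSub p (Finset.univ.filter (fun i => n - (k + 1) ≤ i.val)) g') :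
    g < g' := by
  set S : Finset (Fin (n+1)) := Finset.univ.filter (fun i => n - k ≤ i.val) with hS
  set S' : Finset (Fin (n+1)) := Finset.univ.filter (fun i => n - (k + 1) ≤ i.val) with hS'
  have hi0lt : n - (k + 1) < n + 1 := by omega
  set i0 : Fin (n+1) := ⟨n - (k + 1), hi0lt⟩ with hi0
  have hi0S : i0 ∉ S := by
    simp only [hS, Finset.mem_filter, Finset.mem_univ, true_and, hi0]
    omega
  have hS'eq : S' = insert i0 S := by
    ext i
    simp only [hS, hS', Finset.mem_filter, Finset.mem_univ, true_and, Finset.mem_insert,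
      Fin.ext_iff, hi0]
    omega
  set Q : ℕ := ∏ j ∈ S, p j with hQ
  set q : ℕ := p i0 with hq
  have hq2 : 2 ≤ q := (hp i0).two_le
  have hQpos : 0 < Q := Finset.prod_pos (fun i _ => (hp i).pos)
  have hcop : Nat.Coprime q Q := by
    refine Nat.Coprime.prod_right (fun i hi => ?_)
    refine (Nat.coprime_primes (hp i0) (hp i)).2 (fun h => hi0S ?_)
    rwa [hmono.injective h]
  set j0 : Fin (n+1) := ⟨n, by omega⟩ with hj0def
  have hj0S : j0 ∈ S := by
    simp only [hS, Finset.mem_filter, Finset.mem_univ, true_and, hj0def]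
    omega
  have hj0 : p j0 * (Q / p j0) = Q := Nat.mul_div_cancel' (Finset.dvd_prod_of_mem p hj0S)
  -- the key non-representability
  have key : ¬ RepSub p S' (q * g + (q - 1) * Q) := by
    rintro ⟨c, hc⟩
    rw [hS'eq, Finset.sum_insert hi0S, Finset.prod_insert hi0S] at hc
    rw [Nat.mul_div_cancel_left Q (by omega : 0 < q)] at hc
    have hsum : ∑ i ∈ S, c i * (q * Q / p i) = q * ∑ i ∈ S, c i * (Q / p i) := by
      rw [Finset.mul_sum]
      refine Finset.sum_congr rfl (fun i hi => ?_)
      rw [Nat.mul_div_assoc q (Finset.dvd_prod_of_mem p hi)]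
      ring
    rw [hsum] at hc
    set T := ∑ i ∈ S, c i * (Q / p i) with hT
    have hc2 : (c i0 + 1) * Q + q * T = q * (g + Q) := by
      have h1 : (q - 1) * Q + Q = q * Q := by
        have : (q - 1) + 1 = q := by omega
        calc (q - 1) * Q + Q = ((q - 1) + 1) * Q := by ring
          _ = q * Q := by rw [this]
      calc (c i0 + 1) * Q + q * T = (c i0 * Q + q * T) + Q := by ring
        _ = (q * g + (q - 1) * Q) + Q := by rw [hc]
        _ = q * g + ((q - 1) * Q + Q) := by ring
        _ = q * g + q * Q := by rw [h1]
        _ = q * (g + Q) := by ring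
    have hdvd : q ∣ (c i0 + 1) * Q := by
      have : q ∣ (c i0 + 1) * Q + q * T := ⟨g + Q, hc2⟩
      exact (Nat.dvd_add_right ⟨T, rfl⟩).mp (by rwa [Nat.add_comm] at this)
    obtain ⟨s, hs⟩ := hcop.dvd_of_dvd_mul_right hdvd
    have hs1 : 1 ≤ s := Nat.one_le_iff_ne_zero.mpr (by rintro rfl; omega)
    have hgQ : g + Q = s * Q + T := by
      have : q * (g + Q) = q * (s * Q + T) := by
        rw [← hc2, hs]; ring
      exact Nat.eq_of_mul_eq_mul_left (by omega) this
    have hgeq : g = (s - 1) * Q + T := by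
      have h3 : s * Q = (s - 1) * Q + Q := by
        have h2 : (s - 1) + 1 = s := by omega
        calc s * Q = ((s - 1) + 1) * Q := by rw [h2]
          _ = (s - 1) * Q + Q := by ring
      rw [h3] at hgQ
      omega
    refine hg.1 ⟨fun i => c i + (if i = j0 then (s - 1) * p j0 else 0), ?_⟩
    have hsplit : ∑ i ∈ S, (c i + (if i = j0 then (s - 1) * p j0 else 0)) * (Q / p i)
        = T + ∑ i ∈ S, (if i = j0 then (s - 1) * p j0 else 0) * (Q / p i) := by
      rw [hT, ← Finset.sum_add_distrib]
      refine Finset.sum_congr rfl (fun i hi => ?_)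
      ring
    have hite : ∑ i ∈ S, (if i = j0 then (s - 1) * p j0 else 0) * (Q / p i)
        = (s - 1) * Q := by
      rw [Finset.sum_eq_single j0]
      · rw [if_pos rfl, mul_assoc, hj0]
      · intro i _ hne
        simp [hne]
      · intro h
        exact absurd hj0S h
    rw [hgeq, hsplit, hite]
    ring
  -- conclude
  have hle : q * g + (q - 1) * Q ≤ g' := by
    by_contra h
    push_neg at h
    exact key (hg'.2 _ h)
  have hlt : g < q * g + (q - 1) * Q := by
    have h1 : g ≤ q * g := Nat.le_mul_of_pos_left g (by omega)
    have h2 : 1 ≤ (q - 1) * Q := Nat.one_le_iff_ne_zero.mpr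
      (Nat.mul_ne_zero (by omega) (by omega))
    omega
  omega
end

section
/- For coprime positive integers x and y (both ≥ 1), a rectangle (a1 × a2) can be tiled with translated copies of (x × x) and (y × y) squares if and only if: x divides both a1 and a2, or y divides both a1 and a2, or one of a1, a2 is divisible by both x and y and the other is a nonnegative integer combination of x and y. -/
open Finset


/-- The `a1 × a2` grid of unit cells is partitioned by axis-aligned translated
copies of bricks from `bricks` placed at integer positions.  A placement
`(x, y, w, h)` covers cells `(i, j)` with `x ≤ i < x + w` and `y ≤ j < y + h`. -/
def Tiles (bricks : Finset (ℕ × ℕ)) (a1 a2 : ℕ) : Prop :=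
  ∃ P : Finset (ℕ × ℕ × ℕ × ℕ),
    (∀ q ∈ P, (q.2.2.1, q.2.2.2) ∈ bricks ∧ q.1 + q.2.2.1 ≤ a1 ∧ q.2.1 + q.2.2.2 ≤ a2) ∧
    (∀ i j : ℕ, i < a1 → j < a2 →
      ∃! q : ℕ × ℕ × ℕ × ℕ, q ∈ P ∧
        q.1 ≤ i ∧ i < q.1 + q.2.2.1 ∧ q.2.1 ≤ j ∧ j < q.2.1 + q.2.2.2)

lemma fricke_sum_grid {M : Type*} [AddCommMonoid M] (f : ℕ → ℕ → M)
    {P : Finset (ℕ × ℕ × ℕ × ℕ)} {a1 a2 : ℕ}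
    (hb : ∀ q ∈ P, q.1 + q.2.2.1 ≤ a1 ∧ q.2.1 + q.2.2.2 ≤ a2)
    (hu : ∀ i j : ℕ, i < a1 → j < a2 →
      ∃! q : ℕ × ℕ × ℕ × ℕ, q ∈ P ∧ q.1 ≤ i ∧ i < q.1 + q.2.2.1 ∧ q.2.1 ≤ j ∧ j < q.2.1 + q.2.2.2) :
    ∑ i ∈ range a1, ∑ j ∈ range a2, f i j
      = ∑ q ∈ P, ∑ i ∈ Ico q.1 (q.1 + q.2.2.1), ∑ j ∈ Ico q.2.1 (q.2.1 + q.2.2.2), f i j := by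
  have step1 : ∑ i ∈ range a1, ∑ j ∈ range a2, f i j
      = ∑ i ∈ range a1, ∑ j ∈ range a2, ∑ q ∈ P.filter
          (fun q => q.1 ≤ i ∧ i < q.1 + q.2.2.1 ∧ q.2.1 ≤ j ∧ j < q.2.1 + q.2.2.2), f i j := by
    refine sum_congr rfl fun i hi => sum_congr rfl fun j hj => ?_
    obtain ⟨q₀, hq₀, huniq⟩ := hu i j (mem_range.mp hi) (mem_range.mp hj)
    have hfil : P.filter (fun q => q.1 ≤ i ∧ i < q.1 + q.2.2.1 ∧ q.2.1 ≤ j ∧ j < q.2.1 + q.2.2.2) = {q₀} := by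
      refine eq_singleton_iff_unique_mem.mpr ⟨mem_filter.mpr ⟨hq₀.1, hq₀.2⟩, fun r hr => ?_⟩
      have := mem_filter.mp hr
      exact huniq r ⟨this.1, this.2⟩
    rw [hfil, sum_singleton]
  rw [step1]
  have step2 : ∀ i ∈ range a1, ∀ j ∈ range a2,
      ∑ q ∈ P.filter (fun q => q.1 ≤ i ∧ i < q.1 + q.2.2.1 ∧ q.2.1 ≤ j ∧ j < q.2.1 + q.2.2.2), f i j
      = ∑ q ∈ P, if q.1 ≤ i ∧ i < q.1 + q.2.2.1 ∧ q.2.1 ≤ j ∧ j < q.2.1 + q.2.2.2 then f i j else 0 := by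
    intro i _ j _; rw [sum_filter]
  rw [sum_congr rfl fun i hi => sum_congr rfl fun j hj => step2 i hi j hj]
  conv_lhs => enter [2, i]; rw [sum_comm]
  rw [sum_comm]
  refine sum_congr rfl fun q hq => ?_
  obtain ⟨h1, h2⟩ := hb q hq
  have inner : ∀ i, ∑ j ∈ range a2,
      (if q.1 ≤ i ∧ i < q.1 + q.2.2.1 ∧ q.2.1 ≤ j ∧ j < q.2.1 + q.2.2.2 then f i j else 0)
      = if q.1 ≤ i ∧ i < q.1 + q.2.2.1 then ∑ j ∈ Ico q.2.1 (q.2.1 + q.2.2.2), f i j else 0 := by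
    intro i
    by_cases hA : q.1 ≤ i ∧ i < q.1 + q.2.2.1
    · simp only [hA, if_true, hA.1, hA.2, true_and]
      rw [← sum_filter]
      congr 1
      ext j
      simp only [mem_filter, mem_range, mem_Ico]
      omega
    · simp only [hA, if_false]
      rw [Finset.sum_eq_zero]
      intro j _
      rw [if_neg]
      tauto
  rw [sum_congr rfl fun i _ => inner i, ← sum_filter]
  congr 1
  ext i
  simp only [mem_filter, mem_range, mem_Ico]
  omega

lemma fricke_tiles_zero (b : Finset (ℕ × ℕ)) (a1 : ℕ) : Tiles b a1 0 :=
  ⟨∅, by simp, fun i j _ hj => absurd hj (by omega)⟩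

lemma fricke_tiles_glue {b : Finset (ℕ × ℕ)} {a1 a2 a2' : ℕ}
    (h1 : Tiles b a1 a2) (h2 : Tiles b a1 a2') : Tiles b a1 (a2 + a2') := by
  obtain ⟨P, hPb, hPu⟩ := h1
  obtain ⟨Q, hQb, hQu⟩ := h2
  refine ⟨P ∪ Q.image (fun q => (q.1, q.2.1 + a2, q.2.2)), ?_, ?_⟩
  · intro q hq
    rcases mem_union.mp hq with h | h
    · obtain ⟨h1', h2', h3'⟩ := hPb q h; exact ⟨h1', h2', by omega⟩
    · obtain ⟨r, hr, rfl⟩ := mem_image.mp h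
      obtain ⟨h1', h2', h3'⟩ := hQb r hr
      exact ⟨h1', h2', by dsimp only; omega⟩
  · intro i j hi hj
    by_cases hcase : j < a2
    · obtain ⟨q₀, hq₀, hub⟩ := hPu i j hi hcase
      refine ⟨q₀, ⟨mem_union_left _ hq₀.1, hq₀.2⟩, ?_⟩
      rintro r ⟨hr, hcov⟩
      rcases mem_union.mp hr with h | h
      · exact hub r ⟨h, hcov⟩
      · obtain ⟨s, hs, rfl⟩ := mem_image.mp h
        exfalso; dsimp only at hcov; omega
    · obtain ⟨q₀, ⟨hq₀m, hc1, hc2, hc3, hc4⟩, hub⟩ := hQu i (j - a2) hi (by omega)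
      refine ⟨(q₀.1, q₀.2.1 + a2, q₀.2.2),
        ⟨mem_union_right _ (mem_image_of_mem _ hq₀m), by dsimp only; omega⟩, ?_⟩
      rintro r ⟨hr, hcov⟩
      rcases mem_union.mp hr with h | h
      · exfalso
        have := (hPb r h).2.2
        omega
      · obtain ⟨s, hs, rfl⟩ := mem_image.mp h
        dsimp only at hcov
        have hs' : s = q₀ := hub s ⟨hs, by omega⟩
        rw [hs']

lemma fricke_tiles_stack {b : Finset (ℕ × ℕ)} {a1 s : ℕ} (hst : Tiles b a1 s) :
    ∀ m : ℕ, Tiles b a1 (m * s)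
  | 0 => by simpa using fricke_tiles_zero b a1
  | (m + 1) => by
      have := fricke_tiles_glue (fricke_tiles_stack hst m) hst
      rwa [show m * s + s = (m + 1) * s by ring] at this

lemma fricke_tiles_strip {b : Finset (ℕ × ℕ)} {a1 s : ℕ} (hs : 0 < s) (hsb : (s, s) ∈ b)
    (hdvd : s ∣ a1) : Tiles b a1 s := by
  obtain ⟨k, rfl⟩ := hdvd
  refine ⟨(range k).image (fun t => (s * t, 0, s, s)), ?_, ?_⟩
  · intro q hq
    obtain ⟨t, ht, rfl⟩ := mem_image.mp hq
    refine ⟨hsb, ?_, by dsimp only; omega⟩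
    dsimp only
    have : s * (t + 1) ≤ s * k := Nat.mul_le_mul_left s (mem_range.mp ht)
    rw [Nat.mul_succ] at this
    omega
  · intro i j hi hj
    have hik : i / s < k := by
      rw [Nat.div_lt_iff_lt_mul hs, mul_comm]; exact hi
    have hd1 : s * (i / s) ≤ i := Nat.mul_div_le i s
    have hd2 : i < s * (i / s) + s := by
      have := Nat.div_add_mod i s
      have := Nat.mod_lt i hs
      omega
    refine ⟨(s * (i / s), 0, s, s), ⟨mem_image_of_mem _ (mem_range.mpr hik), by dsimp only; omega⟩, ?_⟩
    rintro r ⟨hr, hcov⟩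
    obtain ⟨t, ht, rfl⟩ := mem_image.mp hr
    dsimp only at hcov
    have : t = i / s := by
      have h1 : s * t ≤ i := hcov.1
      have h2 : i < s * t + s := hcov.2.1
      have := Nat.div_add_mod i s
      have hmod : i % s < s := Nat.mod_lt i hs
      nlinarith [Nat.div_add_mod i s]
    rw [this]

lemma fricke_tiles_swap {x y a1 a2 : ℕ} (h : Tiles {(x, x), (y, y)} a1 a2) :
    Tiles {(x, x), (y, y)} a2 a1 := by
  obtain ⟨P, hPb, hPu⟩ := h
  refine ⟨P.image (fun q => (q.2.1, q.1, q.2.2.2, q.2.2.1)), ?_, ?_⟩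
  · intro q hq
    obtain ⟨r, hr, rfl⟩ := mem_image.mp hq
    obtain ⟨h1', h2', h3'⟩ := hPb r hr
    have hsq : r.2.2.2 = r.2.2.1 := by
      rcases mem_insert.mp h1' with h | h
      · rw [Prod.ext_iff] at h; omega
      · rw [mem_singleton, Prod.ext_iff] at h; omega
    refine ⟨?_, by dsimp only; omega, by dsimp only; omega⟩
    dsimp only
    rw [hsq]
    rwa [hsq] at h1'
  · intro i j hi hj
    obtain ⟨q₀, ⟨hq₀m, hc1, hc2, hc3, hc4⟩, hub⟩ := hPu j i hj hi
    refine ⟨(q₀.2.1, q₀.1, q₀.2.2.2, q₀.2.2.1),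
      ⟨mem_image_of_mem _ hq₀m, by dsimp only; omega⟩, ?_⟩
    rintro r ⟨hr, hcov⟩
    obtain ⟨s, hs, rfl⟩ := mem_image.mp hr
    dsimp only at hcov
    have hs' : s = q₀ := hub s ⟨hs, by omega⟩
    rw [hs']

lemma fricke_brick_cases {x y a1 a2 : ℕ} {P : Finset (ℕ × ℕ × ℕ × ℕ)}
    (hPb : ∀ q ∈ P, (q.2.2.1, q.2.2.2) ∈ ({(x, x), (y, y)} : Finset (ℕ × ℕ)) ∧
      q.1 + q.2.2.1 ≤ a1 ∧ q.2.1 + q.2.2.2 ≤ a2) :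
    ∀ q ∈ P, (q.2.2.1 = x ∧ q.2.2.2 = x) ∨ (q.2.2.1 = y ∧ q.2.2.2 = y) := by
  intro q hq
  have h := (hPb q hq).1
  rcases mem_insert.mp h with h | h
  · left; rw [Prod.ext_iff] at h; exact ⟨h.1, h.2⟩
  · right; rw [mem_singleton, Prod.ext_iff] at h; exact ⟨h.1, h.2⟩

lemma fricke_col_comb {x y a1 a2 : ℕ} (h : Tiles {(x, x), (y, y)} a1 a2) (ha1 : 0 < a1) :
    ∃ u v : ℕ, a2 = u * x + v * y := by
  obtain ⟨P, hPb, hPu⟩ := h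
  have H := fricke_sum_grid (fun i j => if i = 0 then (1 : ℕ) else 0)
    (fun q hq => ⟨(hPb q hq).2.1, (hPb q hq).2.2⟩) hPu
  have hL : ∑ i ∈ range a1, ∑ j ∈ range a2, (if i = 0 then (1 : ℕ) else 0) = a2 := by
    rw [Finset.sum_eq_single 0]
    · simp
    · intro b _ hb; simp [hb]
    · intro h0; simp only [mem_range] at h0; omega
  have hR : ∀ q ∈ P,
      ∑ i ∈ Ico q.1 (q.1 + q.2.2.1), ∑ j ∈ Ico q.2.1 (q.2.1 + q.2.2.2),
        (if i = 0 then (1 : ℕ) else 0)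
      = if q.1 = 0 ∧ 0 < q.2.2.1 then q.2.2.2 else 0 := by
    intro q hq
    have h1 : ∀ i ∈ Ico q.1 (q.1 + q.2.2.1),
        ∑ j ∈ Ico q.2.1 (q.2.1 + q.2.2.2), (if i = 0 then (1 : ℕ) else 0)
        = if i = 0 then q.2.2.2 else 0 := by
      intro i _
      by_cases hi : i = 0 <;> simp [hi, Nat.card_Ico]
    rw [Finset.sum_congr rfl h1, Finset.sum_ite_eq' (Ico q.1 (q.1 + q.2.2.1)) 0 (fun _ => q.2.2.2)]
    simp only [mem_Ico]
    congr 1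
    simp only [eq_iff_iff]
    omega
  rw [hL, Finset.sum_congr rfl hR, ← Finset.sum_filter] at H
  set F := P.filter (fun q => q.1 = 0 ∧ 0 < q.2.2.1) with hF
  have hsplit : ∑ q ∈ F, q.2.2.2
      = ∑ q ∈ F.filter (fun q => q.2.2.2 = x), q.2.2.2
        + ∑ q ∈ F.filter (fun q => ¬ q.2.2.2 = x), q.2.2.2 :=
    (Finset.sum_filter_add_sum_filter_not F _ _).symm
  have hx' : ∑ q ∈ F.filter (fun q => q.2.2.2 = x), q.2.2.2
      = (F.filter (fun q => q.2.2.2 = x)).card * x := by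
    rw [Finset.sum_congr rfl (fun q hq => (mem_filter.mp hq).2), Finset.sum_const, smul_eq_mul]
  have hy' : ∑ q ∈ F.filter (fun q => ¬ q.2.2.2 = x), q.2.2.2
      = (F.filter (fun q => ¬ q.2.2.2 = x)).card * y := by
    rw [Finset.sum_congr rfl (fun q hq => ?_), Finset.sum_const, smul_eq_mul]
    have hm := mem_filter.mp hq
    rcases fricke_brick_cases hPb q (mem_filter.mp hm.1).1 with ⟨_, h2⟩ | ⟨_, h2⟩
    · exact absurd h2 hm.2
    · exact h2
  exact ⟨(F.filter (fun q => q.2.2.2 = x)).card, (F.filter (fun q => ¬ q.2.2.2 = x)).card, by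
    rw [H, hsplit, hx', hy']⟩

lemma fricke_dvd_or_dvd {x y a1 a2 : ℕ} (hx : 0 < x) (hy : 0 < y)
    (h : Tiles {(x, x), (y, y)} a1 a2) : x ∣ a1 ∨ y ∣ a2 := by
  by_cases hx1 : x = 1
  · left; rw [hx1]; exact one_dvd _
  by_cases hy1 : y = 1
  · right; rw [hy1]; exact one_dvd _
  have hx2 : 1 < x := by omega
  have hy2 : 1 < y := by omega
  obtain ⟨P, hPb, hPu⟩ := h
  set ω := Complex.exp (2 * Real.pi * Complex.I / x) with hωdef
  set ζ := Complex.exp (2 * Real.pi * Complex.I / y) with hζdef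
  have hω : IsPrimitiveRoot ω x := Complex.isPrimitiveRoot_exp x (by omega)
  have hζ : IsPrimitiveRoot ζ y := Complex.isPrimitiveRoot_exp y (by omega)
  have H := fricke_sum_grid (fun i j => ω ^ i * ζ ^ j)
    (fun q hq => ⟨(hPb q hq).2.1, (hPb q hq).2.2⟩) hPu
  have hIco : ∀ (r : ℂ) (p w : ℕ), ∑ i ∈ Ico p (p + w), r ^ i = r ^ p * ∑ i ∈ range w, r ^ i := by
    intro r p w
    rw [Finset.sum_Ico_eq_sum_range]
    simp only [add_tsub_cancel_left, pow_add]
    rw [← Finset.mul_sum]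
  have hR : ∀ q ∈ P,
      ∑ i ∈ Ico q.1 (q.1 + q.2.2.1), ∑ j ∈ Ico q.2.1 (q.2.1 + q.2.2.2), ω ^ i * ζ ^ j = 0 := by
    intro q hq
    rw [← Finset.sum_mul_sum]
    rcases fricke_brick_cases hPb q hq with ⟨hw, hh⟩ | ⟨hw, hh⟩
    · rw [hw, hIco, hω.geom_sum_eq_zero hx2, mul_zero, zero_mul]
    · rw [hh, hIco ζ, hζ.geom_sum_eq_zero hy2, mul_zero, mul_zero]
  rw [Finset.sum_eq_zero hR, ← Finset.sum_mul_sum] at H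
  rcases mul_eq_zero.mp H with h0 | h0
  · left
    have hne : ω ≠ 1 := hω.ne_one hx2
    rw [geom_sum_eq hne] at h0
    rw [div_eq_zero_iff] at h0
    rcases h0 with h0 | h0
    · exact (hω.pow_eq_one_iff_dvd a1).mp (by linear_combination h0)
    · exact absurd (by linear_combination h0) hne
  · right
    have hne : ζ ≠ 1 := hζ.ne_one hy2
    rw [geom_sum_eq hne, div_eq_zero_iff] at h0
    rcases h0 with h0 | h0
    · exact (hζ.pow_eq_one_iff_dvd a2).mp (by linear_combination h0)
    · exact absurd (by linear_combination h0) hne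

/-- Fricke: characterization of rectangles tileable by
x×x and y×y squares, for coprime x, y. -/
theorem fricke (x y a1 a2 : ℕ) (hx : 0 < x) (hy : 0 < y)
    (hco : Nat.gcd x y = 1) (ha1 : 0 < a1) (ha2 : 0 < a2) :
    Tiles {(x, x), (y, y)} a1 a2 ↔
      (x ∣ a1 ∧ x ∣ a2) ∨ (y ∣ a1 ∧ y ∣ a2) ∨
      (x ∣ a1 ∧ y ∣ a1 ∧ ∃ u v : ℕ, a2 = u * x + v * y) ∨
      (x ∣ a2 ∧ y ∣ a2 ∧ ∃ u v : ℕ, a1 = u * x + v * y) := by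
  have hmx : (x, x) ∈ ({(x, x), (y, y)} : Finset (ℕ × ℕ)) := by simp
  have hmy : (y, y) ∈ ({(x, x), (y, y)} : Finset (ℕ × ℕ)) := by simp
  constructor
  · intro h
    have hswap := fricke_tiles_swap h
    have h1 := fricke_dvd_or_dvd hx hy h
    have h2 := fricke_dvd_or_dvd hx hy hswap
    have hc2 := fricke_col_comb h ha1
    have hc1 := fricke_col_comb hswap ha2
    rcases h1 with hxa1 | hya2
    · rcases h2 with hxa2 | hya1
      · exact Or.inl ⟨hxa1, hxa2⟩
      · exact Or.inr (Or.inr (Or.inl ⟨hxa1, hya1, hc2⟩))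
    · rcases h2 with hxa2 | hya1
      · exact Or.inr (Or.inr (Or.inr ⟨hxa2, hya2, hc1⟩))
      · exact Or.inr (Or.inl ⟨hya1, hya2⟩)
  · intro h
    rcases h with ⟨hxa1, hxa2⟩ | ⟨hya1, hya2⟩ | ⟨hxa1, hya1, u, v, rfl⟩ | ⟨hxa2, hya2, u, v, ha⟩
    · obtain ⟨m, rfl⟩ := hxa2
      rw [mul_comm]
      exact fricke_tiles_stack (fricke_tiles_strip hx hmx hxa1) m
    · obtain ⟨m, rfl⟩ := hya2
      rw [mul_comm]
      exact fricke_tiles_stack (fricke_tiles_strip hy hmy hya1) m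
    · exact fricke_tiles_glue (fricke_tiles_stack (fricke_tiles_strip hx hmx hxa1) u)
        (fricke_tiles_stack (fricke_tiles_strip hy hmy hya1) v)
    · apply fricke_tiles_swap
      rw [ha]
      exact fricke_tiles_glue (fricke_tiles_stack (fricke_tiles_strip hx hmx hxa2) u)
        (fricke_tiles_stack (fricke_tiles_strip hy hmy hya2) v)
end

section
/- Let a1, a2, p, q, r, s ≥ 2 be integers with r < s, gcd(qs, qr, rs) = 1, and gcd(p,r) = gcd(p,s) = gcd(r,s) = 1. If a1 and a2 are both at least max{2qrs - (qs+qr+rs) + 1, (p-1)(s-1), (r-1)(s-1)}, then the rectangle (a1 × a2) can be tiled with bricks (p × q) and (r × s), where rotations of the (r × s) brick are allowed. -/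
theorem tiles_zero_w (B : Finset (ℕ × ℕ)) (h : ℕ) : Tiles B 0 h :=
  ⟨∅, by simp, fun i j hi _ => absurd hi (Nat.not_lt_zero i)⟩

theorem tiles_zero_h (B : Finset (ℕ × ℕ)) (w : ℕ) : Tiles B w 0 :=
  ⟨∅, by simp, fun i j _ hj => absurd hj (Nat.not_lt_zero j)⟩

theorem tiles_brick {B : Finset (ℕ × ℕ)} {w h : ℕ} (hB : (w, h) ∈ B) : Tiles B w h := by
  refine ⟨{(0, 0, w, h)}, ?_, ?_⟩
  · intro t ht; simp at ht; subst ht; exact ⟨hB, by simp, by simp⟩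
  · intro i j hi hj
    refine ⟨(0, 0, w, h), ⟨by simp, by simp; omega⟩, ?_⟩
    rintro t ⟨ht, _⟩
    simpa using ht

theorem tiles_horiz {B : Finset (ℕ × ℕ)} {a b h : ℕ}
    (H1 : Tiles B a h) (H2 : Tiles B b h) : Tiles B (a + b) h := by
  obtain ⟨P1, hP1, hc1⟩ := H1
  obtain ⟨P2, hP2, hc2⟩ := H2
  refine ⟨P1 ∪ P2.image (fun t => (t.1 + a, t.2)), ?_, ?_⟩
  · intro t ht
    rcases Finset.mem_union.mp ht with ht | ht
    · obtain ⟨h1, h2, h3⟩ := hP1 t ht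
      exact ⟨h1, by omega, h3⟩
    · obtain ⟨t0, ht0, rfl⟩ := Finset.mem_image.mp ht
      obtain ⟨h1, h2, h3⟩ := hP2 t0 ht0
      exact ⟨h1, by simp only; omega, h3⟩
  · intro i j hi hj
    by_cases hia : i < a
    · obtain ⟨t, ⟨htP, hcov⟩, huniq⟩ := hc1 i j hia hj
      refine ⟨t, ⟨Finset.mem_union_left _ htP, hcov⟩, ?_⟩
      rintro t' ⟨ht', hcov'⟩
      rcases Finset.mem_union.mp ht' with h' | h'
      · exact huniq t' ⟨h', hcov'⟩
      · exfalso
        obtain ⟨t0, ht0, rfl⟩ := Finset.mem_image.mp h'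
        obtain ⟨c1, c2, c3, c4⟩ := hcov'
        simp only at c1
        omega
    · push_neg at hia
      obtain ⟨t, ⟨htP, hcov⟩, huniq⟩ := hc2 (i - a) j (by omega) hj
      obtain ⟨c1, c2, c3, c4⟩ := hcov
      refine ⟨(t.1 + a, t.2), ⟨Finset.mem_union_right _ (Finset.mem_image_of_mem _ htP),
        by simp only; omega, by simp only; omega, c3, c4⟩, ?_⟩
      rintro t' ⟨ht', hcov'⟩
      rcases Finset.mem_union.mp ht' with h' | h'
      · exfalso
        obtain ⟨_, h2, _⟩ := hP1 t' h'
        obtain ⟨d1, d2, d3, d4⟩ := hcov'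
        omega
      · obtain ⟨t0, ht0, rfl⟩ := Finset.mem_image.mp h'
        obtain ⟨d1, d2, d3, d4⟩ := hcov'
        simp only at d1 d2
        have heq : t0 = t := huniq t0 ⟨ht0, by omega, by omega, d3, d4⟩
        rw [heq]

theorem tiles_vert {B : Finset (ℕ × ℕ)} {a h1 h2 : ℕ}
    (H1 : Tiles B a h1) (H2 : Tiles B a h2) : Tiles B a (h1 + h2) := by
  obtain ⟨P1, hP1, hc1⟩ := H1
  obtain ⟨P2, hP2, hc2⟩ := H2
  refine ⟨P1 ∪ P2.image (fun t => (t.1, t.2.1 + h1, t.2.2)), ?_, ?_⟩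
  · intro t ht
    rcases Finset.mem_union.mp ht with ht | ht
    · obtain ⟨g1, g2, g3⟩ := hP1 t ht
      exact ⟨g1, g2, by omega⟩
    · obtain ⟨t0, ht0, rfl⟩ := Finset.mem_image.mp ht
      obtain ⟨g1, g2, g3⟩ := hP2 t0 ht0
      exact ⟨g1, g2, by simp only; omega⟩
  · intro i j hi hj
    by_cases hja : j < h1
    · obtain ⟨t, ⟨htP, hcov⟩, huniq⟩ := hc1 i j hi hja
      refine ⟨t, ⟨Finset.mem_union_left _ htP, hcov⟩, ?_⟩
      rintro t' ⟨ht', hcov'⟩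
      rcases Finset.mem_union.mp ht' with h' | h'
      · exact huniq t' ⟨h', hcov'⟩
      · exfalso
        obtain ⟨t0, ht0, rfl⟩ := Finset.mem_image.mp h'
        obtain ⟨c1, c2, c3, c4⟩ := hcov'
        simp only at c3
        omega
    · push_neg at hja
      obtain ⟨t, ⟨htP, hcov⟩, huniq⟩ := hc2 i (j - h1) hi (by omega)
      obtain ⟨c1, c2, c3, c4⟩ := hcov
      refine ⟨(t.1, t.2.1 + h1, t.2.2), ⟨Finset.mem_union_right _ (Finset.mem_image_of_mem _ htP),
        c1, c2, by simp only; omega, by simp only; omega⟩, ?_⟩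
      rintro t' ⟨ht', hcov'⟩
      rcases Finset.mem_union.mp ht' with h' | h'
      · exfalso
        obtain ⟨_, _, h3⟩ := hP1 t' h'
        obtain ⟨d1, d2, d3, d4⟩ := hcov'
        omega
      · obtain ⟨t0, ht0, rfl⟩ := Finset.mem_image.mp h'
        obtain ⟨d1, d2, d3, d4⟩ := hcov'
        simp only at d3 d4
        have heq : t0 = t := huniq t0 ⟨ht0, d1, d2, by omega, by omega⟩
        rw [heq]

theorem tiles_rep_horiz {B : Finset (ℕ × ℕ)} {w h : ℕ} (T : Tiles B w h) :
    ∀ k, Tiles B (k * w) h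
  | 0 => by simpa using tiles_zero_w B h
  | (k + 1) => by
      have := tiles_horiz T (tiles_rep_horiz T k)
      simpa [Nat.succ_mul, Nat.add_comm] using this

theorem tiles_rep_vert {B : Finset (ℕ × ℕ)} {w h : ℕ} (T : Tiles B w h) :
    ∀ k, Tiles B w (k * h)
  | 0 => by simpa using tiles_zero_h B w
  | (k + 1) => by
      have := tiles_vert T (tiles_rep_vert T k)
      simpa [Nat.succ_mul, Nat.add_comm] using this

theorem tiles_combo {B : Finset (ℕ × ℕ)} {w1 w2 H : ℕ}
    (T1 : Tiles B w1 H) (T2 : Tiles B w2 H) (α β : ℕ) :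
    Tiles B (α * w1 + β * w2) H :=
  tiles_horiz (tiles_rep_horiz T1 α) (tiles_rep_horiz T2 β)


/-- Choose `0 ≤ x < n` with `x * c ≡ N (mod n)`, possible when `gcd c n = 1`. -/
theorem exists_mod_inv (c n N : ℕ) (hn : 0 < n) (h : Nat.Coprime c n) :
    ∃ x : ℤ, 0 ≤ x ∧ x < n ∧ (n : ℤ) ∣ ((N : ℤ) - x * c) := by
  have hab := Nat.gcd_eq_gcd_ab c n
  rw [h] at hab
  set u := Nat.gcdA c n with hu
  set v := Nat.gcdB c n with hv
  have hn' : (0 : ℤ) < n := by exact_mod_cast hn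
  refine ⟨(N * u) % n, Int.emod_nonneg _ (ne_of_gt hn'), Int.emod_lt_of_pos _ hn', ?_⟩
  have heq := Int.mul_ediv_add_emod ((N : ℤ) * u) n
  refine ⟨(N : ℤ) * v + ((N : ℤ) * u / n) * c, ?_⟩
  push_cast at hab
  linear_combination (N : ℤ) * hab - (c : ℤ) * heq

/-- Chicken McNugget: every `N ≥ (m-1)(n-1)` is a nonneg combination of coprime `m, n`. -/
theorem rep_two (m n N : ℕ) (hm : 1 ≤ m) (hn : 1 ≤ n) (h : Nat.Coprime m n)
    (hN : (m - 1) * (n - 1) ≤ N) : ∃ a b : ℕ, N = a * m + b * n := by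
  obtain ⟨x, hx0, hxn, k, hk⟩ := exists_mod_inv m n N (by omega) h
  have hm' : (1 : ℤ) ≤ m := by exact_mod_cast hm
  have hn' : (1 : ℤ) ≤ n := by exact_mod_cast hn
  have hN' : ((m : ℤ) - 1) * ((n : ℤ) - 1) ≤ N := by
    have : (((m - 1) * (n - 1) : ℕ) : ℤ) ≤ N := by exact_mod_cast hN
    rwa [Nat.cast_mul, Nat.cast_sub hm, Nat.cast_sub hn] at this
  have hxm : x * m ≤ ((n : ℤ) - 1) * m :=
    mul_le_mul_of_nonneg_right (by omega) (by omega)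
  have hk0 : 0 ≤ k := by nlinarith
  refine ⟨x.toNat, k.toNat, ?_⟩
  have h1 : ((x.toNat : ℤ)) = x := Int.toNat_of_nonneg hx0
  have h2 : ((k.toNat : ℤ)) = k := Int.toNat_of_nonneg hk0
  have : (N : ℤ) = (x.toNat : ℤ) * m + (k.toNat : ℤ) * n := by
    rw [h1, h2]; linarith [hk]
  exact_mod_cast this

/-- Frobenius-type representation for the three generators `qs, qr, rs`. -/
theorem rep_three (q r s N : ℕ) (hq : 1 ≤ q) (hr : 1 ≤ r) (hs : 1 ≤ s)
    (hqr : Nat.Coprime q r) (hqs : Nat.Coprime q s) (hrs : Nat.Coprime r s)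
    (hN : 2 * q * r * s + 1 ≤ N + q * s + q * r + r * s) :
    ∃ A B C : ℕ, N = A * (q * s) + B * (q * r) + C * (r * s) := by
  obtain ⟨x, hx0, hxs, hxd⟩ := exists_mod_inv (q * r) s N (by omega)
    (Nat.Coprime.mul hqs hrs)
  obtain ⟨y, hy0, hyr, hyd⟩ := exists_mod_inv (q * s) r N (by omega)
    (Nat.Coprime.mul hqr (hrs.symm))
  -- t = N - y*(q*s) - x*(q*r), divisible by r*s
  have hrd : (r : ℤ) ∣ ((N : ℤ) - y * (q * s) - x * (q * r)) := by
    obtain ⟨k, hk⟩ := hyd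
    exact ⟨k - x * q, by push_cast at hk ⊢; linear_combination hk⟩
  have hsd : (s : ℤ) ∣ ((N : ℤ) - y * (q * s) - x * (q * r)) := by
    obtain ⟨k, hk⟩ := hxd
    exact ⟨k - y * q, by push_cast at hk ⊢; linear_combination hk⟩
  have hcop : IsCoprime (r : ℤ) (s : ℤ) := by
    rw [Int.isCoprime_iff_gcd_eq_one]
    simpa using hrs
  obtain ⟨k, hk⟩ := hcop.mul_dvd hrd hsd
  have hq' : (1 : ℤ) ≤ q := by exact_mod_cast hq
  have hr' : (1 : ℤ) ≤ r := by exact_mod_cast hr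
  have hs' : (1 : ℤ) ≤ s := by exact_mod_cast hs
  have hN' : 2 * (q:ℤ) * r * s + 1 ≤ (N:ℤ) + q * s + q * r + r * s := by exact_mod_cast hN
  have hyb : y * ((q:ℤ) * s) ≤ ((r:ℤ) - 1) * (q * s) :=
    mul_le_mul_of_nonneg_right (by omega) (by positivity)
  have hxb : x * ((q:ℤ) * r) ≤ ((s:ℤ) - 1) * (q * r) :=
    mul_le_mul_of_nonneg_right (by omega) (by positivity)
  have hk0 : 0 ≤ k := by
    have ht : 1 - (r:ℤ) * s ≤ (r:ℤ) * s * k := by nlinarith [hk, hyb, hxb, hN']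
    by_contra hneg
    push_neg at hneg
    have : (r:ℤ) * s * k ≤ (r:ℤ) * s * (-1) :=
      mul_le_mul_of_nonneg_left (by omega) (by positivity)
    nlinarith
  refine ⟨y.toNat, x.toNat, k.toNat, ?_⟩
  have h1 : ((k.toNat : ℤ)) = k := Int.toNat_of_nonneg hk0
  have h2 : ((y.toNat : ℤ)) = y := Int.toNat_of_nonneg hy0
  have h3 : ((x.toNat : ℤ)) = x := Int.toNat_of_nonneg hx0
  have : (N : ℤ) = (y.toNat : ℤ) * (q * s) + (x.toNat : ℤ) * (q * r) + (k.toNat : ℤ) * (r * s) := by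
    rw [h1, h2, h3]
    linear_combination hk
  exact_mod_cast this


/-- Corollary 1: sufficient side lengths for tiling with
(p×q) bricks (fixed orientation) and (r×s) bricks (rotations allowed). -/
theorem tiling_pq_rs (a1 a2 p q r s : ℕ)
    (ha1 : 2 ≤ a1) (ha2 : 2 ≤ a2) (hp : 2 ≤ p) (hq : 2 ≤ q) (hr : 2 ≤ r) (hs : 2 ≤ s)
    (hrs : r < s)
    (hgcd : Nat.gcd (q * s) (Nat.gcd (q * r) (r * s)) = 1)
    (hpr : Nat.gcd p r = 1) (hps : Nat.gcd p s = 1) (hrs' : Nat.gcd r s = 1)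
    (hb1 : max (2 * q * r * s - (q * s + q * r + r * s) + 1)
        (max ((p - 1) * (s - 1)) ((r - 1) * (s - 1))) ≤ a1)
    (hb2 : max (2 * q * r * s - (q * s + q * r + r * s) + 1)
        (max ((p - 1) * (s - 1)) ((r - 1) * (s - 1))) ≤ a2) :
    Tiles {(p, q), (r, s), (s, r)} a1 a2 := by
  set Br : Finset (ℕ × ℕ) := {(p, q), (r, s), (s, r)} with hBr
  have mem_pq : (p, q) ∈ Br := by simp [hBr]
  have mem_rs : (r, s) ∈ Br := by simp [hBr]
  have mem_sr : (s, r) ∈ Br := by simp [hBr]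
  -- pairwise coprimality of q, r, s
  have hqr : Nat.Coprime q r := by
    have : Nat.gcd q r ∣ 1 := by
      rw [← hgcd]
      exact Nat.dvd_gcd ((Nat.gcd_dvd_left q r).trans (dvd_mul_right q s))
        (Nat.dvd_gcd ((Nat.gcd_dvd_left q r).trans (dvd_mul_right q r))
          ((Nat.gcd_dvd_right q r).trans (dvd_mul_right r s)))
    exact Nat.dvd_one.mp this
  have hqs : Nat.Coprime q s := by
    have : Nat.gcd q s ∣ 1 := by
      rw [← hgcd]
      exact Nat.dvd_gcd ((Nat.gcd_dvd_left q s).trans (dvd_mul_right q s))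
        (Nat.dvd_gcd ((Nat.gcd_dvd_left q s).trans (dvd_mul_right q r))
          ((Nat.gcd_dvd_right q s).trans (dvd_mul_left s r)))
    exact Nat.dvd_one.mp this
  -- bounds on a1
  have hps1 : (p - 1) * (s - 1) ≤ a1 :=
    le_trans (le_trans (le_max_left _ _) (le_max_right _ _)) hb1
  have hrs1 : (r - 1) * (s - 1) ≤ a1 :=
    le_trans (le_trans (le_max_right _ _) (le_max_right _ _)) hb1
  have hpr1 : (p - 1) * (r - 1) ≤ a1 :=
    le_trans (Nat.mul_le_mul le_rfl (by omega)) hps1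
  -- representation of a2 by q*s, q*r, r*s
  have hineq : q * s + q * r + r * s ≤ 2 * q * r * s := by
    have h1 : q * s * 2 ≤ q * s * r := Nat.mul_le_mul le_rfl hr
    have h2 : q * r * 2 ≤ q * r * s := Nat.mul_le_mul le_rfl hs
    have h3 : r * s * 2 ≤ r * s * q := Nat.mul_le_mul le_rfl hq
    nlinarith [h1, h2, h3]
  have hA2 : 2 * q * r * s - (q * s + q * r + r * s) + 1 ≤ a2 :=
    le_trans (le_max_left _ _) hb2
  obtain ⟨A, B, C, ha2rep⟩ := rep_three q r s a2 (by omega) (by omega) (by omega)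
    hqr hqs hrs' (by omega)
  -- strip of height q*s
  have T1 : Tiles Br a1 (q * s) := by
    obtain ⟨α, β, hab⟩ := rep_two p r a1 (by omega) (by omega) hpr hpr1
    have c1 : Tiles Br p (q * s) := by
      have := tiles_rep_vert (tiles_brick mem_pq) s
      rwa [Nat.mul_comm s q] at this
    have c2 : Tiles Br r (q * s) := tiles_rep_vert (tiles_brick mem_rs) q
    rw [hab]
    exact tiles_combo c1 c2 α β
  -- strip of height q*r
  have T2 : Tiles Br a1 (q * r) := by
    obtain ⟨α, β, hab⟩ := rep_two p s a1 (by omega) (by omega) hps hps1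
    have c1 : Tiles Br p (q * r) := by
      have := tiles_rep_vert (tiles_brick mem_pq) r
      rwa [Nat.mul_comm r q] at this
    have c2 : Tiles Br s (q * r) := tiles_rep_vert (tiles_brick mem_sr) q
    rw [hab]
    exact tiles_combo c1 c2 α β
  -- strip of height r*s
  have T3 : Tiles Br a1 (r * s) := by
    obtain ⟨α, β, hab⟩ := rep_two r s a1 (by omega) (by omega) hrs' hrs1
    have c1 : Tiles Br r (r * s) := tiles_rep_vert (tiles_brick mem_rs) r
    have c2 : Tiles Br s (r * s) := by
      have := tiles_rep_vert (tiles_brick mem_sr) s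
      rwa [Nat.mul_comm s r] at this
    rw [hab]
    exact tiles_combo c1 c2 α β
  rw [ha2rep]
  exact tiles_vert (tiles_vert (tiles_rep_vert T1 A) (tiles_rep_vert T2 B)) (tiles_rep_vert T3 C)
end

section
/- Let L, a, b, c, r be positive integers such that b divides r, r = x1*a + x2*c for some nonnegative integers x1, x2, and L*c = y1*a + y2*b for some nonnegative integers y1, y2. Then the square of side r + a*c can be tiled with squares of sides a, b, and c. -/
lemma tiles_single (B : Finset (ℕ × ℕ)) (w h m n : ℕ) (hw : 0 < w) (hh : 0 < h)
    (hB : (w, h) ∈ B) : Tiles B (m * w) (n * h) := by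
  refine ⟨(Finset.range m ×ˢ Finset.range n).image (fun p => (p.1 * w, p.2 * h, w, h)), ?_, ?_⟩
  · intro q hq
    simp only [Finset.mem_image, Finset.mem_product, Finset.mem_range] at hq
    obtain ⟨⟨i, j⟩, ⟨hi, hj⟩, rfl⟩ := hq
    refine ⟨hB, ?_, ?_⟩
    · have : (i + 1) * w ≤ m * w := Nat.mul_le_mul_right _ hi
      simpa [add_mul] using this
    · have : (j + 1) * h ≤ n * h := Nat.mul_le_mul_right _ hj
      simpa [add_mul] using this
  · intro i j hi hj
    have hdm := Nat.mod_add_div' i w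
    have hdm' := Nat.mod_add_div' j h
    have hmw := Nat.mod_lt i hw
    have hmh := Nat.mod_lt j hh
    refine ⟨(i / w * w, j / h * h, w, h), ⟨?_, ?_, ?_, ?_, ?_⟩, ?_⟩
    · simp only [Finset.mem_image, Finset.mem_product, Finset.mem_range]
      exact ⟨(i / w, j / h),
        ⟨(Nat.div_lt_iff_lt_mul hw).2 hi, (Nat.div_lt_iff_lt_mul hh).2 hj⟩, rfl⟩
    · exact Nat.div_mul_le_self i w
    · show i < i / w * w + w; omega
    · exact Nat.div_mul_le_self j h
    · show j < j / h * h + h; omega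
    · rintro ⟨x, y, w', h'⟩ ⟨hmem, h1, h2, h3, h4⟩
      simp only [Finset.mem_image, Finset.mem_product, Finset.mem_range] at hmem
      obtain ⟨⟨p, p'⟩, ⟨hp, hp'⟩, heq⟩ := hmem
      simp only [Prod.mk.injEq] at heq
      obtain ⟨rfl, rfl, rfl, rfl⟩ := heq
      simp only at h1 h2 h3 h4
      have e1 : p = i / w := by
        have : i / w = p := Nat.div_eq_of_lt_le h1 (by simpa [add_mul] using h2)
        omega
      have e2 : p' = j / h := by
        have : j / h = p' := Nat.div_eq_of_lt_le h3 (by simpa [add_mul] using h4)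
        omega
      simp [e1, e2]

lemma tiles_hstack {B : Finset (ℕ × ℕ)} {a1 a1' a2 : ℕ}
    (h1 : Tiles B a1 a2) (h2 : Tiles B a1' a2) : Tiles B (a1 + a1') a2 := by
  obtain ⟨P1, hP1, hU1⟩ := h1
  obtain ⟨P2, hP2, hU2⟩ := h2
  refine ⟨P1 ∪ P2.image (fun q => (q.1 + a1, q.2)), ?_, ?_⟩
  · intro q hq
    rcases Finset.mem_union.1 hq with hq | hq
    · obtain ⟨hb, hx, hy⟩ := hP1 q hq
      exact ⟨hb, by omega, hy⟩
    · obtain ⟨q', hq', rfl⟩ := Finset.mem_image.1 hq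
      obtain ⟨hb, hx, hy⟩ := hP2 q' hq'
      exact ⟨hb, by simpa using (by omega : q'.1 + a1 + q'.2.2.1 ≤ a1 + a1'), hy⟩
  · intro i j hi hj
    by_cases hcase : i < a1
    · obtain ⟨q, ⟨hqP, hcov⟩, huniq⟩ := hU1 i j hcase hj
      refine ⟨q, ⟨Finset.mem_union_left _ hqP, hcov⟩, ?_⟩
      rintro q' ⟨hq'P, hcov'⟩
      rcases Finset.mem_union.1 hq'P with hm | hm
      · exact huniq q' ⟨hm, hcov'⟩
      · obtain ⟨q'', _, rfl⟩ := Finset.mem_image.1 hm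
        exfalso
        simp only at hcov'
        omega
    · obtain ⟨q, ⟨hqP, hcov⟩, huniq⟩ := hU2 (i - a1) j (by omega) hj
      refine ⟨(q.1 + a1, q.2), ⟨Finset.mem_union_right _ (Finset.mem_image_of_mem _ hqP), ?_⟩, ?_⟩
      · simp only
        omega
      · rintro q' ⟨hq'P, hcov'⟩
        rcases Finset.mem_union.1 hq'P with hm | hm
        · exfalso
          obtain ⟨_, hx, _⟩ := hP1 q' hm
          omega
        · obtain ⟨q'', hq'', rfl⟩ := Finset.mem_image.1 hm
          simp only at hcov'
          have : q'' = q := huniq q'' ⟨hq'', by omega, by omega, hcov'.2.2.1, hcov'.2.2.2⟩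
          rw [this]

lemma tiles_vstack {B : Finset (ℕ × ℕ)} {a1 a2 a2' : ℕ}
    (h1 : Tiles B a1 a2) (h2 : Tiles B a1 a2') : Tiles B a1 (a2 + a2') := by
  obtain ⟨P1, hP1, hU1⟩ := h1
  obtain ⟨P2, hP2, hU2⟩ := h2
  refine ⟨P1 ∪ P2.image (fun q => (q.1, q.2.1 + a2, q.2.2)), ?_, ?_⟩
  · intro q hq
    rcases Finset.mem_union.1 hq with hq | hq
    · obtain ⟨hb, hx, hy⟩ := hP1 q hq
      exact ⟨hb, hx, by omega⟩
    · obtain ⟨q', hq', rfl⟩ := Finset.mem_image.1 hq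
      obtain ⟨hb, hx, hy⟩ := hP2 q' hq'
      exact ⟨hb, hx, by simpa using (by omega : q'.2.1 + a2 + q'.2.2.2 ≤ a2 + a2')⟩
  · intro i j hi hj
    by_cases hcase : j < a2
    · obtain ⟨q, ⟨hqP, hcov⟩, huniq⟩ := hU1 i j hi hcase
      refine ⟨q, ⟨Finset.mem_union_left _ hqP, hcov⟩, ?_⟩
      rintro q' ⟨hq'P, hcov'⟩
      rcases Finset.mem_union.1 hq'P with hm | hm
      · exact huniq q' ⟨hm, hcov'⟩
      · obtain ⟨q'', _, rfl⟩ := Finset.mem_image.1 hm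
        exfalso
        simp only at hcov'
        omega
    · obtain ⟨q, ⟨hqP, hcov⟩, huniq⟩ := hU2 i (j - a2) hi (by omega)
      refine ⟨(q.1, q.2.1 + a2, q.2.2), ⟨Finset.mem_union_right _ (Finset.mem_image_of_mem _ hqP), ?_⟩, ?_⟩
      · simp only
        omega
      · rintro q' ⟨hq'P, hcov'⟩
        rcases Finset.mem_union.1 hq'P with hm | hm
        · exfalso
          obtain ⟨_, _, hy⟩ := hP1 q' hm
          omega
        · obtain ⟨q'', hq'', rfl⟩ := Finset.mem_image.1 hm
          simp only at hcov'
          have : q'' = q := huniq q'' ⟨hq'', hcov'.1, hcov'.2.1, by omega, by omega⟩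
          rw [this]

/-- if b ∣ r, r = x1*a + x2*c and L*c = y1*a + y2*b, then the
square of side r + a*c can be tiled with a×a, b×b and c×c squares. -/
theorem tiling_square_r_plus_ac (L a b c r : ℕ)
    (hL : 0 < L) (ha : 0 < a) (hb : 0 < b) (hc : 0 < c) (hr : 0 < r)
    (hbr : b ∣ r)
    (hx : ∃ x1 x2 : ℕ, r = x1 * a + x2 * c)
    (hy : ∃ y1 y2 : ℕ, L * c = y1 * a + y2 * b) :
    Tiles {(a, a), (b, b), (c, c)} (r + a * c) (r + a * c) := by
  obtain ⟨x1, x2, hx⟩ := hx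
  obtain ⟨k, hk⟩ := hbr
  set B : Finset (ℕ × ℕ) := {(a, a), (b, b), (c, c)} with hB
  have haB : (a, a) ∈ B := by simp [hB]
  have hbB : (b, b) ∈ B := by simp [hB]
  have hcB : (c, c) ∈ B := by simp [hB]
  have t_rr : Tiles B r r := by
    have := tiles_single B b b k k hb hb hbB
    rwa [show k * b = r by rw [mul_comm]; omega] at this
  have t_r_ac : Tiles B r (a * c) := by
    have h1 : Tiles B (x1 * a) (a * c) := by
      have := tiles_single B a a x1 c ha ha haB
      rwa [mul_comm c a] at this
    have h2 : Tiles B (x2 * c) (a * c) := tiles_single B c c x2 a hc hc hcB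
    have := tiles_hstack h1 h2
    rwa [← hx] at this
  have t_ac_r : Tiles B (a * c) r := by
    have h1 : Tiles B (a * c) (x1 * a) := by
      have := tiles_single B a a c x1 ha ha haB
      rwa [mul_comm c a] at this
    have h2 : Tiles B (a * c) (x2 * c) := tiles_single B c c a x2 hc hc hcB
    have := tiles_vstack h1 h2
    rwa [← hx] at this
  have t_ac_ac : Tiles B (a * c) (a * c) := by
    have := tiles_single B a a c c ha ha haB
    rwa [mul_comm c a] at this
  exact tiles_hstack (tiles_vstack t_rr t_r_ac) (tiles_vstack t_ac_r t_ac_ac)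
end

section
/- Let L, a, b, c be positive integers such that L*c = y1*a + y2*b for some nonnegative integers y1, y2. Then for every positive integer k, the square of side L*c + k*a*b can be tiled with squares of sides a, b, and c. -/
lemma tiles_mono {B B' : Finset (ℕ × ℕ)} {a1 a2 : ℕ} (hBB : B ⊆ B')
    (h : Tiles B a1 a2) : Tiles B' a1 a2 := by
  obtain ⟨P, hP1, hP2⟩ := h
  exact ⟨P, fun q hq => ⟨hBB (hP1 q hq).1, (hP1 q hq).2⟩, hP2⟩

lemma tiles_grid (s m n : ℕ) (hs : 0 < s) : Tiles {(s, s)} (m * s) (n * s) := by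
  refine ⟨(Finset.range m ×ˢ Finset.range n).image (fun p => (p.1 * s, p.2 * s, s, s)),
    ?_, ?_⟩
  · intro q hq
    simp only [Finset.mem_image, Finset.mem_product, Finset.mem_range] at hq
    obtain ⟨⟨i, j⟩, ⟨hi, hj⟩, rfl⟩ := hq
    refine ⟨by simp, ?_, ?_⟩ <;> dsimp only
    · calc i * s + s = (i + 1) * s := by ring
        _ ≤ m * s := Nat.mul_le_mul_right s hi
    · calc j * s + s = (j + 1) * s := by ring
        _ ≤ n * s := Nat.mul_le_mul_right s hj
  · intro i j hi hj
    have hdi : i / s < m := Nat.div_lt_of_lt_mul (by rw [mul_comm]; exact hi)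
    have hdj : j / s < n := Nat.div_lt_of_lt_mul (by rw [mul_comm]; exact hj)
    have hmi : i / s * s + i % s = i := by rw [mul_comm]; exact Nat.div_add_mod i s
    have hmj : j / s * s + j % s = j := by rw [mul_comm]; exact Nat.div_add_mod j s
    have hri : i % s < s := Nat.mod_lt _ hs
    have hrj : j % s < s := Nat.mod_lt _ hs
    refine ⟨(i / s * s, j / s * s, s, s), ⟨?_, by dsimp only; omega, by dsimp only; omega,
      by dsimp only; omega, by dsimp only; omega⟩, ?_⟩
    · exact Finset.mem_image.2 ⟨(i / s, j / s),
        Finset.mem_product.2 ⟨Finset.mem_range.2 hdi, Finset.mem_range.2 hdj⟩, rfl⟩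
    · rintro r ⟨hrP, h1, h2, h3, h4⟩
      simp only [Finset.mem_image, Finset.mem_product, Finset.mem_range] at hrP
      obtain ⟨⟨i', j'⟩, ⟨hi', hj'⟩, rfl⟩ := hrP
      dsimp only at h1 h2 h3 h4 ⊢
      have e1 : i / s = i' := Nat.div_eq_of_lt_le h1 (by rw [add_mul, one_mul]; omega)
      have e2 : j / s = j' := Nat.div_eq_of_lt_le h3 (by rw [add_mul, one_mul]; omega)
      rw [e1, e2]

lemma tiles_hglue {B : Finset (ℕ × ℕ)} {a1 a1' a2 : ℕ}
    (h : Tiles B a1 a2) (h' : Tiles B a1' a2) : Tiles B (a1 + a1') a2 := by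
  obtain ⟨P, hP1, hP2⟩ := h
  obtain ⟨Q, hQ1, hQ2⟩ := h'
  refine ⟨P ∪ Q.image (fun q => (q.1 + a1, q.2)), ?_, ?_⟩
  · intro q hq
    rcases Finset.mem_union.1 hq with hq | hq
    · obtain ⟨hb, h1, h2⟩ := hP1 q hq
      exact ⟨hb, by omega, h2⟩
    · obtain ⟨r, hr, rfl⟩ := Finset.mem_image.1 hq
      obtain ⟨hb, h1, h2⟩ := hQ1 r hr
      exact ⟨hb, by dsimp only; omega, h2⟩
  · intro i j hi hj
    by_cases hcase : i < a1
    · obtain ⟨q, ⟨hqP, hcov⟩, huniq⟩ := hP2 i j hcase hj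
      refine ⟨q, ⟨Finset.mem_union_left _ hqP, hcov⟩, ?_⟩
      rintro r ⟨hrP, hr1, hr2, hr3, hr4⟩
      rcases Finset.mem_union.1 hrP with h | h
      · exact huniq r ⟨h, hr1, hr2, hr3, hr4⟩
      · obtain ⟨t, ht, rfl⟩ := Finset.mem_image.1 h
        dsimp only at hr1
        omega
    · have hi' : i - a1 < a1' := by omega
      obtain ⟨q, ⟨hqQ, c1, c2, c3, c4⟩, huniq⟩ := hQ2 (i - a1) j hi' hj
      refine ⟨(q.1 + a1, q.2), ⟨Finset.mem_union_right _ (Finset.mem_image_of_mem _ hqQ),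
        by dsimp only; omega, by dsimp only; omega, c3, c4⟩, ?_⟩
      rintro r ⟨hrP, hr1, hr2, hr3, hr4⟩
      rcases Finset.mem_union.1 hrP with h | h
      · obtain ⟨_, hw, _⟩ := hP1 r h
        omega
      · obtain ⟨t, ht, rfl⟩ := Finset.mem_image.1 h
        dsimp only at hr1 hr2 hr3 hr4 ⊢
        have : t = q := huniq t ⟨ht, by omega, by omega, hr3, hr4⟩
        rw [this]

lemma tiles_vglue {B : Finset (ℕ × ℕ)} {a1 a2 a2' : ℕ}
    (h : Tiles B a1 a2) (h' : Tiles B a1 a2') : Tiles B a1 (a2 + a2') := by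
  obtain ⟨P, hP1, hP2⟩ := h
  obtain ⟨Q, hQ1, hQ2⟩ := h'
  refine ⟨P ∪ Q.image (fun q => (q.1, q.2.1 + a2, q.2.2)), ?_, ?_⟩
  · intro q hq
    rcases Finset.mem_union.1 hq with hq | hq
    · obtain ⟨hb, h1, h2⟩ := hP1 q hq
      exact ⟨hb, h1, by omega⟩
    · obtain ⟨r, hr, rfl⟩ := Finset.mem_image.1 hq
      obtain ⟨hb, h1, h2⟩ := hQ1 r hr
      exact ⟨hb, h1, by dsimp only; omega⟩
  · intro i j hi hj
    by_cases hcase : j < a2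
    · obtain ⟨q, ⟨hqP, hcov⟩, huniq⟩ := hP2 i j hi hcase
      refine ⟨q, ⟨Finset.mem_union_left _ hqP, hcov⟩, ?_⟩
      rintro r ⟨hrP, hr1, hr2, hr3, hr4⟩
      rcases Finset.mem_union.1 hrP with h | h
      · exact huniq r ⟨h, hr1, hr2, hr3, hr4⟩
      · obtain ⟨t, ht, rfl⟩ := Finset.mem_image.1 h
        dsimp only at hr3
        omega
    · have hj' : j - a2 < a2' := by omega
      obtain ⟨q, ⟨hqQ, c1, c2, c3, c4⟩, huniq⟩ := hQ2 i (j - a2) hi hj'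
      refine ⟨(q.1, q.2.1 + a2, q.2.2), ⟨Finset.mem_union_right _ (Finset.mem_image_of_mem _ hqQ),
        c1, c2, by dsimp only; omega, by dsimp only; omega⟩, ?_⟩
      rintro r ⟨hrP, hr1, hr2, hr3, hr4⟩
      rcases Finset.mem_union.1 hrP with h | h
      · obtain ⟨_, _, hw⟩ := hP1 r h
        omega
      · obtain ⟨t, ht, rfl⟩ := Finset.mem_image.1 h
        dsimp only at hr1 hr2 hr3 hr4 ⊢
        have : t = q := huniq t ⟨ht, hr1, hr2, by omega, by omega⟩
        rw [this]

/-- if L*c = y1*a + y2*b, then for every k ≥ 1 the square of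
side L*c + k*a*b can be tiled with a×a, b×b and c×c squares. -/
theorem tiling_square_Lc_plus_kab (L a b c : ℕ)
    (hL : 0 < L) (ha : 0 < a) (hb : 0 < b) (hc : 0 < c)
    (hy : ∃ y1 y2 : ℕ, L * c = y1 * a + y2 * b) :
    ∀ k : ℕ, 1 ≤ k →
      Tiles {(a, a), (b, b), (c, c)} (L * c + k * a * b) (L * c + k * a * b) := by
  intro k hk
  obtain ⟨y1, y2, hy⟩ := hy
  set S : Finset (ℕ × ℕ) := {(a, a), (b, b), (c, c)} with hS
  have hsa : ({(a, a)} : Finset (ℕ × ℕ)) ⊆ S := by simp [hS]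
  have hsb : ({(b, b)} : Finset (ℕ × ℕ)) ⊆ S := by intro x hx; simp at hx; simp [hS, hx]
  have hsc : ({(c, c)} : Finset (ℕ × ℕ)) ⊆ S := by intro x hx; simp at hx; simp [hS, hx]
  have e1 : (k * b) * a = k * a * b := by ring
  have e2 : (k * a) * b = k * a * b := by ring
  -- T1 : L*c × L*c with c-squares
  have T1 : Tiles S (L * c) (L * c) := tiles_mono hsc (tiles_grid c L L hc)
  -- T2 : L*c × k*a*b
  have A2 : Tiles S (y1 * a) (k * a * b) := by
    have := tiles_mono hsa (tiles_grid a y1 (k * b) ha)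
    rwa [e1] at this
  have B2 : Tiles S (y2 * b) (k * a * b) := by
    have := tiles_mono hsb (tiles_grid b y2 (k * a) hb)
    rwa [e2] at this
  have T2 : Tiles S (L * c) (k * a * b) := by
    rw [hy]; exact tiles_hglue A2 B2
  -- T3 : k*a*b × L*c
  have A3 : Tiles S (k * a * b) (y1 * a) := by
    have := tiles_mono hsa (tiles_grid a (k * b) y1 ha)
    rwa [e1] at this
  have B3 : Tiles S (k * a * b) (y2 * b) := by
    have := tiles_mono hsb (tiles_grid b (k * a) y2 hb)
    rwa [e2] at this
  have T3 : Tiles S (k * a * b) (L * c) := by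
    rw [hy]; exact tiles_vglue A3 B3
  -- T4 : k*a*b × k*a*b
  have T4 : Tiles S (k * a * b) (k * a * b) := by
    have := tiles_mono hsa (tiles_grid a (k * b) (k * b) ha)
    rwa [e1] at this
  exact tiles_hglue (tiles_vglue T1 T2) (tiles_vglue T3 T4)
end

section
/- A square (a × a) can be tiled with squares (2 × 2), (3 × 3), and (5 × 5) if and only if a ≠ 1 and a ≠ 7. -/
local notation "B" => ({(2, 2), (3, 3), (5, 5)} : Finset (ℕ × ℕ))

lemma concatH {w1 w2 h : ℕ} (h1 : Tiles B w1 h) (h2 : Tiles B w2 h) :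
    Tiles B (w1 + w2) h := by
  obtain ⟨P1, hv1, hc1⟩ := h1
  obtain ⟨P2, hv2, hc2⟩ := h2
  refine ⟨P1 ∪ P2.image (fun q => (q.1 + w1, q.2)), ?_, ?_⟩
  · intro q hq
    rcases Finset.mem_union.1 hq with hq | hq
    · obtain ⟨hb, hx, hy⟩ := hv1 q hq
      exact ⟨hb, by omega, hy⟩
    · obtain ⟨r, hr, rfl⟩ := Finset.mem_image.1 hq
      obtain ⟨hb, hx, hy⟩ := hv2 r hr
      exact ⟨hb, by simp; omega, hy⟩
  · intro i j hi hj
    by_cases hcase : i < w1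
    · obtain ⟨q, ⟨hqP, hq⟩, hu⟩ := hc1 i j hcase hj
      refine ⟨q, ⟨Finset.mem_union_left _ hqP, hq⟩, ?_⟩
      rintro r ⟨hrP, hr⟩
      rcases Finset.mem_union.1 hrP with hrP | hrP
      · exact hu r ⟨hrP, hr⟩
      · obtain ⟨s, hs, rfl⟩ := Finset.mem_image.1 hrP
        simp at hr; omega
    · obtain ⟨q, ⟨hqP, hq⟩, hu⟩ := hc2 (i - w1) j (by omega) hj
      obtain ⟨_, hqx, _⟩ := hv2 q hqP
      refine ⟨(q.1 + w1, q.2), ⟨Finset.mem_union_right _ (Finset.mem_image_of_mem _ hqP), by simp; omega⟩, ?_⟩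
      rintro r ⟨hrP, hr⟩
      rcases Finset.mem_union.1 hrP with hrP | hrP
      · obtain ⟨_, hrx, _⟩ := hv1 r hrP
        omega
      · obtain ⟨s, hs, rfl⟩ := Finset.mem_image.1 hrP
        simp only at hr
        have := hu s ⟨hs, by omega⟩
        subst this; rfl

lemma concatV {w h1 h2 : ℕ} (t1 : Tiles B w h1) (t2 : Tiles B w h2) :
    Tiles B w (h1 + h2) := by
  obtain ⟨P1, hv1, hc1⟩ := t1
  obtain ⟨P2, hv2, hc2⟩ := t2
  refine ⟨P1 ∪ P2.image (fun q => (q.1, q.2.1 + h1, q.2.2)), ?_, ?_⟩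
  · intro q hq
    rcases Finset.mem_union.1 hq with hq | hq
    · obtain ⟨hb, hx, hy⟩ := hv1 q hq
      exact ⟨hb, hx, by omega⟩
    · obtain ⟨r, hr, rfl⟩ := Finset.mem_image.1 hq
      obtain ⟨hb, hx, hy⟩ := hv2 r hr
      exact ⟨hb, hx, by simp; omega⟩
  · intro i j hi hj
    by_cases hcase : j < h1
    · obtain ⟨q, ⟨hqP, hq⟩, hu⟩ := hc1 i j hi hcase
      refine ⟨q, ⟨Finset.mem_union_left _ hqP, hq⟩, ?_⟩
      rintro r ⟨hrP, hr⟩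
      rcases Finset.mem_union.1 hrP with hrP | hrP
      · exact hu r ⟨hrP, hr⟩
      · obtain ⟨s, hs, rfl⟩ := Finset.mem_image.1 hrP
        simp at hr; omega
    · obtain ⟨q, ⟨hqP, hq⟩, hu⟩ := hc2 i (j - h1) hi (by omega)
      obtain ⟨_, _, hqy⟩ := hv2 q hqP
      refine ⟨(q.1, q.2.1 + h1, q.2.2), ⟨Finset.mem_union_right _ (Finset.mem_image_of_mem _ hqP), by simp at hq ⊢; omega⟩, ?_⟩
      rintro r ⟨hrP, hr⟩
      rcases Finset.mem_union.1 hrP with hrP | hrP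
      · obtain ⟨_, _, hry⟩ := hv1 r hrP
        omega
      · obtain ⟨s, hs, rfl⟩ := Finset.mem_image.1 hrP
        simp only at hr
        have := hu s ⟨hs, by omega⟩
        subst this; rfl

lemma tiles_symm {w h : ℕ} (t : Tiles B w h) : Tiles B h w := by
  obtain ⟨P, hv, hc⟩ := t
  refine ⟨P.image (fun q => (q.2.1, q.1, q.2.2.2, q.2.2.1)), ?_, ?_⟩
  · intro q hq
    obtain ⟨r, hr, rfl⟩ := Finset.mem_image.1 hq
    obtain ⟨hb, hx, hy⟩ := hv r hr
    refine ⟨?_, hy, hx⟩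
    simp only [Finset.mem_insert, Finset.mem_singleton, Prod.mk.injEq] at hb ⊢
    omega
  · intro i j hi hj
    obtain ⟨q, ⟨hqP, hq⟩, hu⟩ := hc j i hj hi
    refine ⟨(q.2.1, q.1, q.2.2.2, q.2.2.1), ⟨Finset.mem_image_of_mem _ hqP, by dsimp only; omega⟩, ?_⟩
    rintro r ⟨hrP, hr⟩
    obtain ⟨s, hs, rfl⟩ := Finset.mem_image.1 hrP
    dsimp only at hr
    have := hu s ⟨hs, by omega⟩
    subst this; rfl

lemma base (k : ℕ) (hk : (k, k) ∈ B) : Tiles B k k := by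
  refine ⟨{(0, 0, k, k)}, ?_, ?_⟩
  · intro q hq
    rw [Finset.mem_singleton] at hq
    subst hq
    exact ⟨hk, by dsimp only; omega, by dsimp only; omega⟩
  · intro i j hi hj
    refine ⟨(0, 0, k, k), ⟨Finset.mem_singleton_self _, by dsimp only; omega⟩, ?_⟩
    rintro r ⟨hrP, hr⟩
    exact Finset.mem_singleton.1 hrP

lemma double_count {α β : Type*} [DecidableEq α] [DecidableEq β] (A : Finset α) (C : Finset β)
    (r : α → β → Prop) [∀ a b, Decidable (r a b)] :
    ∑ a ∈ A, (C.filter (r a)).card = ∑ b ∈ C, (A.filter (fun a => r a b)).card := by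
  simp only [Finset.card_filter]
  exact Finset.sum_comm

lemma tiles_of_cover {a1 a2 : ℕ} (P : Finset (ℕ × ℕ × ℕ × ℕ))
    (hv : ∀ q ∈ P, (q.2.2.1, q.2.2.2) ∈ B ∧ q.1 + q.2.2.1 ≤ a1 ∧ q.2.1 + q.2.2.2 ≤ a2)
    (harea : ∑ q ∈ P, q.2.2.1 * q.2.2.2 = a1 * a2)
    (hcov : ∀ i : ℕ, i < a1 → ∀ j : ℕ, j < a2 → ∃ q ∈ P,
      q.1 ≤ i ∧ i < q.1 + q.2.2.1 ∧ q.2.1 ≤ j ∧ j < q.2.1 + q.2.2.2) :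
    Tiles B a1 a2 := by
  classical
  set C : Finset (ℕ × ℕ) := Finset.range a1 ×ˢ Finset.range a2 with hC
  have key : ∀ c ∈ C, (P.filter (fun q => q.1 ≤ c.1 ∧ c.1 < q.1 + q.2.2.1 ∧
      q.2.1 ≤ c.2 ∧ c.2 < q.2.1 + q.2.2.2)).card = 1 := by
    have hsum : ∑ c ∈ C, (P.filter (fun q => q.1 ≤ c.1 ∧ c.1 < q.1 + q.2.2.1 ∧
        q.2.1 ≤ c.2 ∧ c.2 < q.2.1 + q.2.2.2)).card = a1 * a2 := by
      rw [← double_count P C (fun q c => q.1 ≤ c.1 ∧ c.1 < q.1 + q.2.2.1 ∧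
        q.2.1 ≤ c.2 ∧ c.2 < q.2.1 + q.2.2.2)]
      rw [← harea]
      apply Finset.sum_congr rfl
      intro q hq
      obtain ⟨_, hx, hy⟩ := hv q hq
      have : C.filter (fun c => q.1 ≤ c.1 ∧ c.1 < q.1 + q.2.2.1 ∧
          q.2.1 ≤ c.2 ∧ c.2 < q.2.1 + q.2.2.2) =
          Finset.Ico q.1 (q.1 + q.2.2.1) ×ˢ Finset.Ico q.2.1 (q.2.1 + q.2.2.2) := by
        ext c
        simp only [hC, Finset.mem_filter, Finset.mem_product, Finset.mem_range, Finset.mem_Ico]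
        omega
      rw [this, Finset.card_product, Nat.card_Ico, Nat.card_Ico]
      simp
    have hpos : ∀ c ∈ C, 1 ≤ (P.filter (fun q => q.1 ≤ c.1 ∧ c.1 < q.1 + q.2.2.1 ∧
        q.2.1 ≤ c.2 ∧ c.2 < q.2.1 + q.2.2.2)).card := by
      intro c hc
      simp only [hC, Finset.mem_product, Finset.mem_range] at hc
      obtain ⟨q, hq, hcov'⟩ := hcov c.1 hc.1 c.2 hc.2
      exact Finset.card_pos.2 ⟨q, Finset.mem_filter.2 ⟨hq, hcov'⟩⟩
    intro c hc
    by_contra hne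
    have h2 : 2 ≤ (P.filter (fun q => q.1 ≤ c.1 ∧ c.1 < q.1 + q.2.2.1 ∧
        q.2.1 ≤ c.2 ∧ c.2 < q.2.1 + q.2.2.2)).card := by
      have := hpos c hc; omega
    have hcard : C.card = a1 * a2 := by simp [hC]
    have hge : a1 * a2 + 1 ≤ ∑ c ∈ C, (P.filter (fun q => q.1 ≤ c.1 ∧ c.1 < q.1 + q.2.2.1 ∧
        q.2.1 ≤ c.2 ∧ c.2 < q.2.1 + q.2.2.2)).card := by
      rw [← Finset.sum_erase_add _ _ hc]
      have h1 : (C.erase c).card ≤ ∑ x ∈ C.erase c, (P.filter (fun q => q.1 ≤ x.1 ∧ x.1 < q.1 + q.2.2.1 ∧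
          q.2.1 ≤ x.2 ∧ x.2 < q.2.1 + q.2.2.2)).card := by
        calc (C.erase c).card = ∑ _x ∈ C.erase c, 1 := by simp
        _ ≤ _ := Finset.sum_le_sum (fun x hx => hpos x (Finset.mem_of_mem_erase hx))
      have := Finset.card_erase_of_mem hc
      omega
    omega
  refine ⟨P, hv, ?_⟩
  intro i j hi hj
  have hc : (i, j) ∈ C := by simp [hC, hi, hj]
  have := key (i, j) hc
  obtain ⟨q, hq⟩ := Finset.card_eq_one.1 this
  have hqm : q ∈ P.filter _ := hq ▸ Finset.mem_singleton_self q
  rw [Finset.mem_filter] at hqm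
  refine ⟨q, hqm, ?_⟩
  intro r hr
  have : r ∈ P.filter (fun q => q.1 ≤ i ∧ i < q.1 + q.2.2.1 ∧
      q.2.1 ≤ j ∧ j < q.2.1 + q.2.2.2) := Finset.mem_filter.2 hr
  rw [hq, Finset.mem_singleton] at this
  exact this

lemma t22 : Tiles B 2 2 := base 2 (by decide)
lemma t33 : Tiles B 3 3 := base 3 (by decide)
lemma t55 : Tiles B 5 5 := base 5 (by decide)

lemma t62 : Tiles B 6 2 := by
  have h := concatH (concatH t22 t22) t22
  norm_num at h
  exact h

lemma t63 : Tiles B 6 3 := by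
  have h := concatH t33 t33
  norm_num at h
  exact h

lemma strip6 : ∀ n, 2 ≤ n → Tiles B 6 n := by
  intro n
  induction n using Nat.strong_induction_on with
  | _ n ih =>
    intro hn
    rcases Nat.lt_or_ge n 4 with h4 | h4
    · interval_cases n
      · exact t62
      · exact t63
    · have h := concatV t62 (ih (n - 2) (by omega) (by omega))
      have e : 2 + (n - 2) = n := by omega
      rw [e] at h
      exact h

lemma t713 : Tiles B 7 13 := by
  apply tiles_of_cover {(0,0,2,2),(2,0,5,5),(0,2,2,2),(0,4,2,2),(2,5,3,3),(5,5,2,2),(0,6,2,2),(5,7,2,2),(0,8,5,5),(5,9,2,2),(5,11,2,2)}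
  · decide
  · decide
  · decide

lemma strip6' (n : ℕ) (hn : 2 ≤ n) : Tiles B n 6 := tiles_symm (strip6 n hn)

lemma main : ∀ a, 2 ≤ a → a ≠ 7 → Tiles B a a := by
  intro a
  induction a using Nat.strong_induction_on with
  | _ a ih =>
    intro ha h7
    rcases Nat.lt_or_ge a 8 with h8 | h8
    · interval_cases a
      · exact t22
      · exact t33
      · have h := concatH (concatV t22 t22) (concatV t22 t22)
        norm_num at h
        exact h
      · exact t55
      · exact strip6 6 (by norm_num)
      · exact absurd rfl h7
    · by_cases h13 : a = 13
      · subst h13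
        have h := concatH (strip6 13 (by norm_num)) t713
        norm_num at h
        exact h
      · have hb : 2 ≤ a - 6 := by omega
        have hb7 : a - 6 ≠ 7 := by omega
        have hbb := ih (a - 6) (by omega) hb hb7
        have e1 : 6 + (a - 6) = a := by omega
        have hside : Tiles B (a - 6) a := by
          have h := concatV (strip6' (a - 6) hb) hbb
          rw [e1] at h
          exact h
        have h := concatH (strip6 a (by omega)) hside
        rw [e1] at h
        exact h

lemma not1 : ¬ Tiles B 1 1 := by
  rintro ⟨P, hv, hc⟩
  obtain ⟨q, ⟨hqP, hq⟩, -⟩ := hc 0 0 one_pos one_pos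
  obtain ⟨hb, hx, hy⟩ := hv q hqP
  simp only [Finset.mem_insert, Finset.mem_singleton, Prod.mk.injEq] at hb
  omega

lemma not7 : ¬ Tiles B 7 7 := by
  classical
  rintro ⟨P, hv, hc⟩
  have hwh : ∀ q ∈ P, q.2.2.1 = q.2.2.2 ∧ (q.2.2.1 = 2 ∨ q.2.2.1 = 3 ∨ q.2.2.1 = 5) := by
    intro q hq
    have hb := (hv q hq).1
    simp only [Finset.mem_insert, Finset.mem_singleton, Prod.mk.injEq] at hb
    omega
  set Q := P.filter (fun q => q.2.2.1 = 3 ∨ q.2.2.1 = 5) with hQdef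
  -- each column t contains exactly one odd square
  have col : ∀ t, t < 7 → (Q.filter (fun q => q.1 ≤ t ∧ t < q.1 + q.2.2.1)).card = 1 := by
    intro t ht
    set S := P.filter (fun q => q.1 ≤ t ∧ t < q.1 + q.2.2.1) with hSdef
    set I : ℕ × ℕ × ℕ × ℕ → Finset ℕ :=
      fun q => (Finset.range 7).filter (fun j => q.2.1 ≤ j ∧ j < q.2.1 + q.2.2.2) with hIdef
    have hIcard : ∀ q ∈ S, (I q).card = q.2.2.2 := by
      intro q hq
      have hy := (hv q (Finset.mem_filter.1 hq).1).2.2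
      have : I q = Finset.Ico q.2.1 (q.2.1 + q.2.2.2) := by
        ext j
        simp only [hIdef, Finset.mem_filter, Finset.mem_range, Finset.mem_Ico]
        omega
      rw [this, Nat.card_Ico]
      omega
    have hun : S.biUnion I = Finset.range 7 := by
      ext j
      simp only [Finset.mem_biUnion, hSdef, hIdef, Finset.mem_filter, Finset.mem_range]
      constructor
      · rintro ⟨q, _, hj, -⟩; exact hj
      · intro hj
        obtain ⟨q, ⟨hqP, hq1, hq2, hq3, hq4⟩, -⟩ := hc t j ht hj
        exact ⟨q, ⟨hqP, hq1, hq2⟩, hj, hq3, hq4⟩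
    have hdisj : ∀ q1 ∈ S, ∀ q2 ∈ S, q1 ≠ q2 → Disjoint (I q1) (I q2) := by
      intro q1 hq1 hq2' hq2 hne
      rw [Finset.disjoint_left]
      intro j hj1 hj2
      simp only [hSdef, Finset.mem_filter] at hq1 hq2
      simp only [hIdef, Finset.mem_filter, Finset.mem_range] at hj1 hj2
      exact hne ((hc t j ht hj1.1).unique ⟨hq1.1, hq1.2.1, hq1.2.2, hj1.2.1, hj1.2.2⟩
        ⟨hq2.1, hq2.2.1, hq2.2.2, hj2.2.1, hj2.2.2⟩)
    have hsum7 : ∑ q ∈ S, q.2.2.2 = 7 := by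
      have := Finset.card_biUnion hdisj
      rw [hun, Finset.card_range] at this
      rw [← Finset.sum_congr rfl hIcard]
      omega
    -- split off the odd squares
    set O := S.filter (fun q => q.2.2.1 = 3 ∨ q.2.2.1 = 5) with hOdef
    have hsplit : ∑ q ∈ O, q.2.2.2 + ∑ q ∈ S.filter (fun q => ¬(q.2.2.1 = 3 ∨ q.2.2.1 = 5)), q.2.2.2 = 7 := by
      rw [hOdef, Finset.sum_filter_add_sum_filter_not, hsum7]
    have heven : ∑ q ∈ S.filter (fun q => ¬(q.2.2.1 = 3 ∨ q.2.2.1 = 5)), q.2.2.2 =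
        2 * (S.filter (fun q => ¬(q.2.2.1 = 3 ∨ q.2.2.1 = 5))).card := by
      rw [Finset.sum_congr rfl (fun q hq => ?_), Finset.sum_const, smul_eq_mul, mul_comm]
      have hq' := Finset.mem_filter.1 hq
      have := hwh q (Finset.mem_filter.1 hq'.1).1
      omega
    have hO35 : ∀ q ∈ O, q.2.2.2 = 3 ∨ q.2.2.2 = 5 := by
      intro q hq
      have hq' := Finset.mem_filter.1 hq
      have := hwh q (Finset.mem_filter.1 hq'.1).1
      omega
    have hlow : 3 * O.card ≤ ∑ q ∈ O, q.2.2.2 := by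
      calc 3 * O.card = ∑ _q ∈ O, 3 := by rw [Finset.sum_const, smul_eq_mul, mul_comm]
      _ ≤ _ := Finset.sum_le_sum (fun q hq => by have := hO35 q hq; omega)
    have hOcase : O.card = 0 ∨ O.card = 1 ∨ O.card = 2 := by omega
    rcases hOcase with h0 | h1 | h2
    · rw [Finset.card_eq_zero] at h0
      rw [h0, Finset.sum_empty] at hsplit
      omega
    · have hOeq : O = Q.filter (fun q => q.1 ≤ t ∧ t < q.1 + q.2.2.1) := by
        ext q
        simp only [hOdef, hSdef, hQdef, Finset.mem_filter]
        tauto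
      rw [← hOeq]
      exact h1
    · obtain ⟨q1, q2, hne, hO2⟩ := Finset.card_eq_two.1 h2
      have hs1 : q1 ∈ O := by rw [hO2]; simp
      have hs2 : q2 ∈ O := by rw [hO2]; simp
      rw [hO2, Finset.sum_pair hne] at hsplit
      have := hO35 q1 hs1
      have := hO35 q2 hs2
      omega
  -- double count over the 7 columns
  have hsum : ∑ t ∈ Finset.range 7, (Q.filter (fun q => q.1 ≤ t ∧ t < q.1 + q.2.2.1)).card = 7 := by
    rw [Finset.sum_congr rfl (fun t ht => col t (Finset.mem_range.1 ht))]
    simp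
  rw [double_count (Finset.range 7) Q (fun t q => q.1 ≤ t ∧ t < q.1 + q.2.2.1)] at hsum
  have hw : ∀ q ∈ Q, ((Finset.range 7).filter (fun t => q.1 ≤ t ∧ t < q.1 + q.2.2.1)).card = q.2.2.1 := by
    intro q hq
    have hq' := Finset.mem_filter.1 hq
    have hx := (hv q hq'.1).2.1
    have : (Finset.range 7).filter (fun t => q.1 ≤ t ∧ t < q.1 + q.2.2.1) =
        Finset.Ico q.1 (q.1 + q.2.2.1) := by
      ext s
      simp only [Finset.mem_filter, Finset.mem_range, Finset.mem_Ico]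
      omega
    rw [this, Nat.card_Ico]
    omega
  rw [Finset.sum_congr rfl hw] at hsum
  -- sum of widths of odd squares is 7, widths in {3,5}: impossible
  have hQ35 : ∀ q ∈ Q, q.2.2.1 = 3 ∨ q.2.2.1 = 5 := by
    intro q hq
    exact (Finset.mem_filter.1 hq).2
  have hlow : 3 * Q.card ≤ 7 := by
    calc 3 * Q.card = ∑ _q ∈ Q, 3 := by rw [Finset.sum_const, smul_eq_mul, mul_comm]
    _ ≤ ∑ q ∈ Q, q.2.2.1 := Finset.sum_le_sum (fun q hq => by have := hQ35 q hq; omega)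
    _ = 7 := hsum
  have hhigh : 7 ≤ 5 * Q.card := by
    calc (7:ℕ) = ∑ q ∈ Q, q.2.2.1 := hsum.symm
    _ ≤ ∑ _q ∈ Q, 5 := Finset.sum_le_sum (fun q hq => by have := hQ35 q hq; omega)
    _ = 5 * Q.card := by rw [Finset.sum_const, smul_eq_mul, mul_comm]
  have hQ2 : Q.card = 2 := by omega
  obtain ⟨q1, q2, hne, hQeq⟩ := Finset.card_eq_two.1 hQ2
  have hs1 : q1 ∈ Q := by rw [hQeq]; simp
  have hs2 : q2 ∈ Q := by rw [hQeq]; simp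
  rw [hQeq, Finset.sum_pair hne] at hsum
  have := hQ35 q1 hs1
  have := hQ35 q2 hs2
  omega


/-- a square of side a ≥ 1 can be tiled with 2×2, 3×3 and 5×5
squares if and only if a ≠ 1 and a ≠ 7. -/
theorem tiling_square_235 (a : ℕ) (ha : 1 ≤ a) :
    Tiles {(2, 2), (3, 3), (5, 5)} a a ↔ a ≠ 1 ∧ a ≠ 7 := by
  constructor
  · intro hT
    constructor
    · rintro rfl; exact not1 hT
    · rintro rfl; exact not7 hT
  · rintro ⟨h1, h7⟩
    exact main a (by omega) h7
end

section
/- The square (7 × 7) cannot be tiled with squares (2 × 2), (3 × 3), and (5 × 5). -/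
/-- The 7×7 grid of cells. -/
def Grid7 : Finset (ℕ × ℕ) := Finset.range 7 ×ˢ Finset.range 7

/-- Weighted sum of the cells covered by a placement `q`. -/
def Bq (w : ℕ → ℤ) (q : ℕ × ℕ × ℕ × ℕ) : ℤ :=
  ∑ p ∈ Grid7,
    if q.1 ≤ p.1 ∧ p.1 < q.1 + q.2.2.1 ∧ q.2.1 ≤ p.2 ∧ p.2 < q.2.1 + q.2.2.2 then w p.1 else 0

/-- Column parity weight. -/
def wpar (i : ℕ) : ℤ := if i % 2 = 0 then 1 else -1

lemma key (P : Finset (ℕ × ℕ × ℕ × ℕ))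
    (hcov : ∀ i j : ℕ, i < 7 → j < 7 →
      ∃! q : ℕ × ℕ × ℕ × ℕ, q ∈ P ∧
        q.1 ≤ i ∧ i < q.1 + q.2.2.1 ∧ q.2.1 ≤ j ∧ j < q.2.1 + q.2.2.2)
    (w : ℕ → ℤ) :
    ∑ p ∈ Grid7, w p.1 = ∑ q ∈ P, Bq w q := by
  unfold Bq
  rw [Finset.sum_comm]
  refine Finset.sum_congr rfl ?_
  rintro ⟨i, j⟩ hp
  simp only [Grid7, Finset.mem_product, Finset.mem_range] at hp
  obtain ⟨q0, hq0, huniq⟩ := hcov i j hp.1 hp.2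
  refine ((Finset.sum_eq_single_of_mem q0 hq0.1 ?_).trans ?_).symm
  · intro q hq hne
    rw [if_neg]
    exact fun hc => hne (huniq q ⟨hq, hc⟩)
  · exact if_pos hq0.2

lemma Bval (q : ℕ × ℕ × ℕ × ℕ)
    (hb : (q.2.2.1 = 2 ∧ q.2.2.2 = 2) ∨ (q.2.2.1 = 3 ∧ q.2.2.2 = 3) ∨
          (q.2.2.1 = 5 ∧ q.2.2.2 = 5))
    (hx : q.1 + q.2.2.1 ≤ 7) (hy : q.2.1 + q.2.2.2 ≤ 7) :
    (q.2.2.1 = 2 ∧ Bq (fun _ => 1) q = 4 ∧ Bq wpar q = 0) ∨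
    (q.2.2.1 = 3 ∧ Bq (fun _ => 1) q = 9 ∧ (Bq wpar q = 3 ∨ Bq wpar q = -3)) ∨
    (q.2.2.1 ≠ 2 ∧ q.2.2.1 ≠ 3 ∧ Bq (fun _ => 1) q = 25 ∧
      (Bq wpar q = 5 ∨ Bq wpar q = -5)) := by
  obtain ⟨x, y, z, t⟩ := q
  simp only at hb hx hy ⊢
  rcases hb with ⟨hz, ht⟩ | ⟨hz, ht⟩ | ⟨hz, ht⟩ <;> subst hz <;> subst ht
  · left
    have hx' : x ≤ 5 := by omega
    have hy' : y ≤ 5 := by omega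
    refine ⟨rfl, ?_⟩
    interval_cases x <;> interval_cases y <;> exact ⟨by decide, by decide⟩
  · right; left
    have hx' : x ≤ 4 := by omega
    have hy' : y ≤ 4 := by omega
    refine ⟨rfl, ?_⟩
    interval_cases x <;> interval_cases y <;> exact ⟨by decide, by decide⟩
  · right; right
    have hx' : x ≤ 2 := by omega
    have hy' : y ≤ 2 := by omega
    refine ⟨by decide, by decide, ?_⟩
    interval_cases x <;> interval_cases y <;> exact ⟨by decide, by decide⟩

/-- the 7×7 square cannot be tiled with 2×2, 3×3 and 5×5 squares. -/
theorem no_tiling_7 : ¬ Tiles {(2, 2), (3, 3), (5, 5)} 7 7 := by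
  rintro ⟨P, hP, hcov⟩
  have fact : ∀ q ∈ P,
      (q.2.2.1 = 2 ∧ Bq (fun _ => 1) q = 4 ∧ Bq wpar q = 0) ∨
      (q.2.2.1 = 3 ∧ Bq (fun _ => 1) q = 9 ∧ (Bq wpar q = 3 ∨ Bq wpar q = -3)) ∨
      (q.2.2.1 ≠ 2 ∧ q.2.2.1 ≠ 3 ∧ Bq (fun _ => 1) q = 25 ∧
        (Bq wpar q = 5 ∨ Bq wpar q = -5)) := by
    intro q hq
    refine Bval q ?_ (hP q hq).2.1 (hP q hq).2.2
    have h := (hP q hq).1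
    simpa [Prod.ext_iff] using h
  have h1 := key P hcov (fun _ => (1 : ℤ))
  have h2 := key P hcov wpar
  have e1 : ∑ p ∈ Grid7, (1 : ℤ) = 49 := by decide
  have e2 : ∑ p ∈ Grid7, wpar p.1 = 7 := by decide
  rw [e1] at h1
  rw [e2] at h2
  set s2 := P.filter (fun q => q.2.2.1 = 2) with hs2def
  set s35 := P.filter (fun q => ¬ q.2.2.1 = 2) with hs35def
  set s3 := s35.filter (fun q => q.2.2.1 = 3) with hs3def
  set s5 := s35.filter (fun q => ¬ q.2.2.1 = 3) with hs5def
  have split : ∀ f : (ℕ × ℕ × ℕ × ℕ) → ℤ,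
      ∑ q ∈ P, f q = ∑ q ∈ s2, f q + (∑ q ∈ s3, f q + ∑ q ∈ s5, f q) := by
    intro f
    rw [← Finset.sum_filter_add_sum_filter_not P (fun q => q.2.2.1 = 2) f,
        ← Finset.sum_filter_add_sum_filter_not s35 (fun q => q.2.2.1 = 3) f]
  have mem2 : ∀ q ∈ s2, q ∈ P ∧ q.2.2.1 = 2 := by
    intro q hq; exact Finset.mem_filter.mp hq
  have mem3 : ∀ q ∈ s3, q ∈ P ∧ q.2.2.1 = 3 := by
    intro q hq
    have h := Finset.mem_filter.mp hq
    exact ⟨(Finset.mem_filter.mp h.1).1, h.2⟩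
  have mem5 : ∀ q ∈ s5, q ∈ P ∧ q.2.2.1 ≠ 2 ∧ q.2.2.1 ≠ 3 := by
    intro q hq
    have h := Finset.mem_filter.mp hq
    have h' := Finset.mem_filter.mp h.1
    exact ⟨h'.1, h'.2, h.2⟩
  -- values on each part
  have v2 : ∀ q ∈ s2, Bq (fun _ => 1) q = 4 ∧ Bq wpar q = 0 := by
    intro q hq
    obtain ⟨hqP, h2'⟩ := mem2 q hq
    rcases fact q hqP with ⟨_, h⟩ | ⟨h3, _⟩ | ⟨hne, _⟩
    · exact h
    · omega
    · exact absurd h2' hne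
  have v3 : ∀ q ∈ s3, Bq (fun _ => 1) q = 9 ∧ (Bq wpar q = 3 ∨ Bq wpar q = -3) := by
    intro q hq
    obtain ⟨hqP, h3'⟩ := mem3 q hq
    rcases fact q hqP with ⟨h2', _⟩ | ⟨_, h⟩ | ⟨_, hne, _⟩
    · omega
    · exact h
    · exact absurd h3' hne
  have v5 : ∀ q ∈ s5, Bq (fun _ => 1) q = 25 ∧ (Bq wpar q = 5 ∨ Bq wpar q = -5) := by
    intro q hq
    obtain ⟨hqP, hne2, hne3⟩ := mem5 q hq
    rcases fact q hqP with ⟨h2', _⟩ | ⟨h3', _⟩ | ⟨_, _, h⟩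
    · exact absurd h2' hne2
    · exact absurd h3' hne3
    · exact h
  -- area equation
  have a1 : ∑ q ∈ s2, Bq (fun _ => 1) q = 4 * (s2.card : ℤ) := by
    rw [Finset.sum_congr rfl (fun q hq => (v2 q hq).1), Finset.sum_const]
    push_cast; ring
  have a3 : ∑ q ∈ s3, Bq (fun _ => 1) q = 9 * (s3.card : ℤ) := by
    rw [Finset.sum_congr rfl (fun q hq => (v3 q hq).1), Finset.sum_const]
    push_cast; ring
  have a5 : ∑ q ∈ s5, Bq (fun _ => 1) q = 25 * (s5.card : ℤ) := by
    rw [Finset.sum_congr rfl (fun q hq => (v5 q hq).1), Finset.sum_const]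
    push_cast; ring
  rw [split, a1, a3, a5] at h1
  -- parity equation
  have p2 : ∑ q ∈ s2, Bq wpar q = 0 :=
    Finset.sum_eq_zero fun q hq => (v2 q hq).2
  rw [split, p2] at h2
  set t3 := ∑ q ∈ s3, Bq wpar q with ht3
  set t5 := ∑ q ∈ s5, Bq wpar q with ht5
  have d3 : (3 : ℤ) ∣ t3 := by
    refine Finset.dvd_sum fun q hq => ?_
    rcases (v3 q hq).2 with h | h <;> rw [h] <;> decide
  have d5 : (5 : ℤ) ∣ t5 := by
    refine Finset.dvd_sum fun q hq => ?_
    rcases (v5 q hq).2 with h | h <;> rw [h] <;> decide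
  have hcase : s5.card = 0 ∨ s5.card = 1 := by omega
  rcases hcase with hc | hc
  · have : t5 = 0 := by
      rw [ht5, Finset.card_eq_zero.mp hc, Finset.sum_empty]
    omega
  · have hb : s3.card = 0 := by omega
    have : t3 = 0 := by
      rw [ht3, Finset.card_eq_zero.mp hb, Finset.sum_empty]
    omega
end

section
/- The square (11 × 11) cannot be tiled with squares (2 × 2), (3 × 3), and (7 × 7). -/
/-- A 4×4 symmetric integer matrix used to build the cell weighting. -/
def Mw : ℕ → ℕ → ℤ
  | 0, 0 => -2 | 0, 1 => 0 | 0, 2 => 1 | 0, 3 => 3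
  | 1, 0 => 0 | 1, 1 => 2 | 1, 2 => -3 | 1, 3 => -1
  | 2, 0 => 1 | 2, 1 => -3 | 2, 2 => 4 | 2, 3 => 0
  | 3, 0 => 3 | 3, 1 => -1 | 3, 2 => 0 | 3, 3 => -4
  | _, _ => 0

/-- Row/column type of an index in `0..10`. -/
def tIdx : ℕ → ℕ
  | 0 => 0 | 1 => 1 | 2 => 2 | 3 => 1 | 4 => 0 | 5 => 3
  | 6 => 0 | 7 => 1 | 8 => 2 | 9 => 1 | 10 => 0 | _ => 0

/-- The weight of cell `(i, j)`: every 2×2 and 3×3 placement sums to 0,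
every 7×7 placement sums to a value different from −4, yet the whole 11×11
grid sums to −4. -/
def ww (i j : ℕ) : ℤ := Mw (tIdx i) (tIdx j)

/-- Sum of the weights over an `s × s` square with top-left corner `(x, y)`. -/
def Sb (x y s : ℕ) : ℤ := ∑ i ∈ Finset.range s, ∑ j ∈ Finset.range s, ww (x+i) (y+j)

lemma S2 : ∀ x < 10, ∀ y < 10, Sb x y 2 = 0 := by decide
lemma S3 : ∀ x < 9, ∀ y < 9, Sb x y 3 = 0 := by decide
lemma S7 : ∀ x < 5, ∀ y < 5, Sb x y 7 ≠ -4 := by decide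
lemma Stot : ∑ i ∈ Finset.range 11, ∑ j ∈ Finset.range 11, ww i j = -4 := by decide

/-- the 11×11 square cannot be tiled with 2×2, 3×3 and 7×7 squares. -/
theorem no_tiling_11 : ¬ Tiles {(2, 2), (3, 3), (7, 7)} 11 11 := by
  rintro ⟨P, hP, hcov⟩
  classical
  set grid : Finset (ℕ × ℕ) := Finset.range 11 ×ˢ Finset.range 11 with hgrid
  have hsq : ∀ q ∈ P, (q.2.2.1 = 2 ∧ q.2.2.2 = 2) ∨ (q.2.2.1 = 3 ∧ q.2.2.2 = 3) ∨
      (q.2.2.1 = 7 ∧ q.2.2.2 = 7) := by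
    intro q hq
    have h := (hP q hq).1
    simpa [Prod.ext_iff] using h
  -- step 1: the total weight equals the sum, over the bricks, of the covered weights
  have h1 : ∑ c ∈ grid, ww c.1 c.2 =
      ∑ q ∈ P, ∑ c ∈ grid, if q.1 ≤ c.1 ∧ c.1 < q.1 + q.2.2.1 ∧ q.2.1 ≤ c.2 ∧ c.2 < q.2.1 + q.2.2.2
        then ww c.1 c.2 else 0 := by
    rw [← Finset.sum_comm]
    apply Finset.sum_congr rfl
    rintro ⟨i, j⟩ hc
    have hij : i < 11 ∧ j < 11 := by
      simpa [hgrid, Finset.mem_product, Finset.mem_range] using hc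
    obtain ⟨q0, hq0, huniq⟩ := hcov i j hij.1 hij.2
    rw [Finset.sum_eq_single_of_mem q0 hq0.1]
    · simp only [if_pos hq0.2]
    · intro q hq hne
      rw [if_neg]
      intro hcovq
      exact hne (huniq q ⟨hq, hcovq⟩)
  -- step 2: each brick's contribution is the square sum `Sb`
  have h2 : ∀ q ∈ P,
      (∑ c ∈ grid, if q.1 ≤ c.1 ∧ c.1 < q.1 + q.2.2.1 ∧ q.2.1 ≤ c.2 ∧ c.2 < q.2.1 + q.2.2.2
        then ww c.1 c.2 else 0) = Sb q.1 q.2.1 q.2.2.1 := by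
    rintro ⟨x, y, s1, s2⟩ hq
    have hb := hP _ hq
    have hs : s1 = s2 := by rcases hsq _ hq with ⟨a,b⟩|⟨a,b⟩|⟨a,b⟩ <;> simp_all
    have hx : x + s1 ≤ 11 := hb.2.1
    have hy : y + s2 ≤ 11 := hb.2.2
    subst hs
    rw [← Finset.sum_filter]
    have hfe : grid.filter (fun c => x ≤ c.1 ∧ c.1 < x + s1 ∧ y ≤ c.2 ∧ c.2 < y + s1) =
        (Finset.Ico x (x + s1)) ×ˢ (Finset.Ico y (y + s1)) := by
      ext ⟨i, j⟩
      simp only [Finset.mem_filter, hgrid, Finset.mem_product, Finset.mem_range, Finset.mem_Ico]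
      omega
    rw [hfe, Finset.sum_product]
    simp only [Sb, Finset.sum_Ico_eq_sum_range, Nat.add_sub_cancel_left]
  have htot : (-4 : ℤ) = ∑ q ∈ P, Sb q.1 q.2.1 q.2.2.1 := by
    rw [← Finset.sum_congr rfl h2, ← h1, hgrid, Finset.sum_product, Stot]
  by_cases h7 : ∃ q ∈ P, q.2.2.1 = 7
  · -- there is a 7×7 brick; it is unique since two 7×7 squares in an 11×11 grid overlap
    obtain ⟨q0, hq0P, hq07⟩ := h7
    have hb0 := hP q0 hq0P
    have h07 : q0.2.2.2 = 7 := by rcases hsq _ hq0P with ⟨a,b⟩|⟨a,b⟩|⟨a,b⟩ <;> omega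
    have hone : ∑ q ∈ P, Sb q.1 q.2.1 q.2.2.1 = Sb q0.1 q0.2.1 7 := by
      rw [Finset.sum_eq_single_of_mem q0 hq0P, hq07]
      intro q hq hne
      have hb := hP q hq
      rcases hsq _ hq with ⟨a, b⟩ | ⟨a, b⟩ | ⟨a, b⟩
      · rw [a]; exact S2 _ (by omega) _ (by omega)
      · rw [a]; exact S3 _ (by omega) _ (by omega)
      · exfalso
        apply hne
        obtain ⟨qq, hqq, huniq⟩ := hcov (max q.1 q0.1) (max q.2.1 q0.2.1) (by omega) (by omega)
        have e1 := huniq q ⟨hq, by refine ⟨?_, ?_, ?_, ?_⟩ <;> omega⟩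
        have e2 := huniq q0 ⟨hq0P, by refine ⟨?_, ?_, ?_, ?_⟩ <;> omega⟩
        rw [e1, e2]
    rw [hone] at htot
    exact S7 q0.1 (by omega) q0.2.1 (by omega) htot.symm
  · -- no 7×7 brick: every brick contributes 0, contradicting total −4
    have hz : ∑ q ∈ P, Sb q.1 q.2.1 q.2.2.1 = 0 := by
      apply Finset.sum_eq_zero
      intro q hq
      have hb := hP q hq
      rcases hsq _ hq with ⟨a, b⟩ | ⟨a, b⟩ | ⟨a, b⟩
      · rw [a]; exact S2 _ (by omega) _ (by omega)
      · rw [a]; exact S3 _ (by omega) _ (by omega)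
      · exact absurd ⟨q, hq, a⟩ h7
    rw [hz] at htot
    exact absurd htot (by norm_num)
end
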